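/- arXiv:math/0205174 — 4 statements merged into one kernel-verified Lean document; each statement's English description precedes it below -/
import Mathlib

section
/- Let S = K[x_1,...,x_r] be the polynomial ring over a field K, graded with deg(x_i) = d_i where d_1 ≥ d_2 ≥ ... ≥ d_r are positive integers. Let M be a nonzero finitely generated graded S-module of finite length (Krull dimension 0), and let a(M) be the maximal degree d with M_d ≠ 0. Then for every i ≥ 0, deg(Tor_i^S(M,K)) ≤ d_1 + d_2 + ... + d_i + a(M). -/
open MvPolynomial Finset

namespace TorAux
noncomputable section
variable {K : Type} [Field K] {r : ℕ} (d : Fin r → ℕ)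

/-- weight of a monomial -/
def W (mo : Fin r →₀ ℕ) : ℕ := mo.sum fun l k => d l * k

lemma W_add (m1 m2 : Fin r →₀ ℕ) : W d (m1 + m2) = W d m1 + W d m2 :=
  Finsupp.sum_add_index' (fun _ => by simp) (fun a b1 b2 => by rw [Nat.mul_add])

lemma W_single (l : Fin r) : W d (Finsupp.single l 1) = d l := by
  simp [W, Finsupp.sum_single_index]

lemma W_zero : W d 0 = 0 := by simp [W]

/-- degree-`t` projection (twisted degrees live in `ℤ`) -/
def projP (t : ℤ) (f : MvPolynomial (Fin r) K) : MvPolynomial (Fin r) K :=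
  ∑ mo ∈ f.support, if (W d mo : ℤ) = t then monomial mo (coeff mo f) else 0

lemma coeff_projP (t : ℤ) (f : MvPolynomial (Fin r) K) (mo : Fin r →₀ ℕ) :
    coeff mo (projP d t f) = if (W d mo : ℤ) = t then coeff mo f else 0 := by
  classical
  rw [projP]
  rw [MvPolynomial.coeff_sum]
  by_cases h : coeff mo f = 0
  · rw [Finset.sum_eq_zero, h, ite_self]
    · intro x hx
      by_cases hc : (W d x : ℤ) = t
      · rw [if_pos hc, coeff_monomial]
        by_cases hxm : x = mo
        · subst hxm; simp [h]
        · rw [if_neg hxm]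
      · rw [if_neg hc, coeff_zero]
  · rw [Finset.sum_eq_single mo]
    · by_cases hc : (W d mo : ℤ) = t
      · rw [if_pos hc, if_pos hc, coeff_monomial, if_pos rfl]
      · rw [if_neg hc, if_neg hc, coeff_zero]
    · intro x hx hxm
      by_cases hc : (W d x : ℤ) = t
      · rw [if_pos hc, coeff_monomial, if_neg hxm]
      · rw [if_neg hc, coeff_zero]
    · intro hmo
      exact absurd (MvPolynomial.mem_support_iff.not.mp hmo) (by simpa using h)

/-- coefficient-level homogeneity of degree `t` -/
def HomP (t : ℤ) (f : MvPolynomial (Fin r) K) : Prop :=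
  ∀ mo, coeff mo f ≠ 0 → (W d mo : ℤ) = t

lemma homP_zero (t : ℤ) : HomP d t (0 : MvPolynomial (Fin r) K) := by
  intro mo h; simp at h

lemma homP_projP (t : ℤ) (f : MvPolynomial (Fin r) K) : HomP d t (projP d t f) := by
  intro mo h
  rw [coeff_projP] at h
  by_contra hc
  rw [if_neg hc] at h; exact h rfl

lemma projP_eq_self {t : ℤ} {f : MvPolynomial (Fin r) K} (h : HomP d t f) :
    projP d t f = f := by
  apply MvPolynomial.ext
  intro mo
  rw [coeff_projP]
  by_cases hc : (W d mo : ℤ) = t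
  · rw [if_pos hc]
  · rw [if_neg hc]
    by_contra h0
    exact hc (h mo fun hh => h0 hh.symm)

lemma projP_add (t : ℤ) (f g : MvPolynomial (Fin r) K) :
    projP d t (f + g) = projP d t f + projP d t g := by
  apply MvPolynomial.ext
  intro mo
  rw [coeff_add, coeff_projP, coeff_projP, coeff_projP, coeff_add]
  by_cases hc : (W d mo : ℤ) = t <;> simp [hc]

lemma projP_zero (t : ℤ) : projP d t (0 : MvPolynomial (Fin r) K) = 0 :=
  projP_eq_self d (homP_zero d t)

lemma projP_sum {α : Type*} (t : ℤ) (s : Finset α) (f : α → MvPolynomial (Fin r) K) :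
    projP d t (∑ x ∈ s, f x) = ∑ x ∈ s, projP d t (f x) := by
  classical
  induction s using Finset.induction_on with
  | empty => simp [projP_zero]
  | insert _ _ hx ih => rw [Finset.sum_insert hx, Finset.sum_insert hx, projP_add, ih]

/-- projection through multiplication by a homogeneous factor (on the left) -/
lemma projP_mul_left {s : ℤ} {g : MvPolynomial (Fin r) K} (hg : HomP d s g)
    (t : ℤ) (f : MvPolynomial (Fin r) K) :
    projP d t (g * f) = g * projP d (t - s) f := by
  classical
  apply MvPolynomial.ext
  intro mo
  rw [coeff_projP, coeff_mul, coeff_mul]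
  rw [show (∑ x ∈ antidiagonal mo, coeff x.1 g * coeff x.2 (projP d (t - s) f))
      = ∑ x ∈ antidiagonal mo, (if (W d mo : ℤ) = t then coeff x.1 g * coeff x.2 f else 0)
      from Finset.sum_congr rfl ?_]
  · by_cases hc : (W d mo : ℤ) = t <;> simp [hc]
  · intro x hx
    rw [Finset.HasAntidiagonal.mem_antidiagonal] at hx
    by_cases h1 : coeff x.1 g = 0
    · simp [h1]
    · have hs := hg x.1 h1
      rw [coeff_projP]
      have hW : (W d mo : ℤ) = (W d x.1 : ℤ) + (W d x.2 : ℤ) := by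
        rw [← hx, W_add]; push_cast; ring
      by_cases h2 : (W d x.2 : ℤ) = t - s
      · rw [if_pos h2]
        have : (W d mo : ℤ) = t := by rw [hW, hs, h2]; ring
        rw [if_pos this]
      · rw [if_neg h2, mul_zero]
        have : (W d mo : ℤ) ≠ t := by
          rw [hW, hs]; intro hh; exact h2 (by linarith)
        rw [if_neg this]
-- part C

/-- kill the variables in `A` -/
def phi (A : Finset (Fin r)) : MvPolynomial (Fin r) K →ₐ[K] MvPolynomial (Fin r) K :=
  aeval (fun l => if l ∈ A then 0 else X l)

/-- representability as a combination of the variables in `A` -/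
def Rep (A : Finset (Fin r)) (f : MvPolynomial (Fin r) K) : Prop :=
  ∃ t : Fin r → MvPolynomial (Fin r) K, f = ∑ l ∈ A, X l * t l

lemma Rep.add {A : Finset (Fin r)} {f g : MvPolynomial (Fin r) K}
    (hf : Rep A f) (hg : Rep A g) : Rep A (f + g) := by
  obtain ⟨t1, ht1⟩ := hf; obtain ⟨t2, ht2⟩ := hg
  refine ⟨t1 + t2, ?_⟩
  rw [ht1, ht2, ← Finset.sum_add_distrib]
  apply Finset.sum_congr rfl
  intro l _
  simp [Pi.add_apply]
  ring

lemma rep_sub_phi (A : Finset (Fin r)) (f : MvPolynomial (Fin r) K) :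
    Rep A (f - phi A f) := by
  induction f using MvPolynomial.induction_on with
  | C c => rw [show phi A (C c) = C c by simp [phi], sub_self]; exact ⟨0, by simp⟩
  | add p q hp hq =>
      rw [map_add, show p + q - (phi A p + phi A q) = (p - phi A p) + (q - phi A q) by ring]
      exact hp.add hq
  | mul_X p n hp =>
      rw [map_mul, show phi A (X n) = if n ∈ A then 0 else X n by simp [phi]]
      by_cases hn : n ∈ A
      · rw [if_pos hn, mul_zero, sub_zero]
        exact ⟨fun l => if l = n then p else 0, by
          rw [Finset.sum_eq_single n]
          · simp [mul_comm]
          · intro x hx hxn; simp [hxn]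
          · intro h; exact absurd hn h⟩
      · rw [if_neg hn, show p * X n - phi A p * X n = (p - phi A p) * X n by ring]
        obtain ⟨t, ht⟩ := hp
        refine ⟨fun l => t l * X n, ?_⟩
        rw [ht, Finset.sum_mul]
        apply Finset.sum_congr rfl
        intro l _
        ring

lemma rep_of_phi_eq_zero {A : Finset (Fin r)} {f : MvPolynomial (Fin r) K}
    (hf : phi A f = 0) : Rep A f := by
  have := rep_sub_phi A f
  rwa [hf, sub_zero] at this

lemma phi_eq_zero_of_rep {A : Finset (Fin r)} {f : MvPolynomial (Fin r) K}
    (hf : Rep A f) : phi A f = 0 := by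
  obtain ⟨t, ht⟩ := hf
  rw [ht, map_sum]
  apply Finset.sum_eq_zero
  intro l hl
  rw [map_mul, show phi A (X l) = 0 by simp [phi, hl], zero_mul]

/-- the key regularity property: `X n` is a nonzerodivisor mod the other variables -/
lemma rep_of_smul_rep {A : Finset (Fin r)} {n : Fin r} (hn : n ∉ A)
    {f : MvPolynomial (Fin r) K} (hf : Rep A (X n * f)) : Rep A f := by
  have h0 : phi A (X n * f) = 0 := phi_eq_zero_of_rep hf
  rw [map_mul, show phi A (X n) = X n by simp [phi, hn]] at h0
  have : phi A f = 0 := by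
    rcases mul_eq_zero.mp h0 with h | h
    · exact absurd h (MvPolynomial.X_ne_zero n)
    · exact h
  exact rep_of_phi_eq_zero this

/-- polynomials with zero constant term are combinations of the variables -/
lemma rep_univ_of_constantCoeff {f : MvPolynomial (Fin r) K}
    (hf : constantCoeff f = 0) : Rep Finset.univ f := by
  apply rep_of_phi_eq_zero
  have : (phi (Finset.univ : Finset (Fin r)) : MvPolynomial (Fin r) K →ₐ[K] _)
      = aeval (fun _ => 0) := by
    apply MvPolynomial.algHom_ext; intro l; simp [phi]
  rw [this]
  have h2 : (aeval (fun _ => (0:MvPolynomial (Fin r) K))) f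
      = algebraMap K _ (constantCoeff f) := by
    have : (fun _ : Fin r => (0:MvPolynomial (Fin r) K)) = (0 : Fin r → MvPolynomial (Fin r) K) := rfl
    rw [this, MvPolynomial.aeval_zero]
  rw [h2, hf, map_zero]
-- part D

/-- Koszul sign -/
def sg (l : Fin r) (U : Finset (Fin r)) : MvPolynomial (Fin r) K :=
  (-1) ^ (U.filter (fun u => u < l)).card

lemma sg_empty (l : Fin r) : sg (K := K) l ∅ = 1 := by simp [sg]

lemma sg_insert_of_not_lt {l n : Fin r} (h : ¬ n < l) (U : Finset (Fin r)) :
    sg (K := K) l (insert n U) = sg l U := by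
  classical
  rw [sg, sg, Finset.filter_insert, if_neg h]

lemma sg_insert_of_lt {l n : Fin r} (h : n < l) {U : Finset (Fin r)} (hn : n ∉ U) :
    sg (K := K) l (insert n U) = - sg l U := by
  classical
  rw [sg, sg, Finset.filter_insert, if_pos h, Finset.card_insert_of_notMem
    (fun hc => hn (Finset.mem_of_mem_filter n hc)), pow_succ]
  ring

lemma sg_antisym {l m : Fin r} (hlm : l ≠ m) {U : Finset (Fin r)}
    (hl : l ∉ U) (hm : m ∉ U) :
    sg (K := K) l U * sg m (insert l U) = - (sg m U * sg l (insert m U)) := by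
  rcases lt_or_gt_of_ne hlm with h | h
  · rw [sg_insert_of_lt h hl, sg_insert_of_not_lt (not_lt.mpr h.le) U]
    ring
  · rw [sg_insert_of_lt h hm, sg_insert_of_not_lt (not_lt.mpr h.le) U]
    ring

variable {N : Type} [AddCommGroup N] [Module (MvPolynomial (Fin r) K) N]

/-- the Koszul differential -/
def kappa (K : Type) [Field K] {r : ℕ} {N : Type} [AddCommGroup N]
    [Module (MvPolynomial (Fin r) K) N] (c : Finset (Fin r) → N) : Finset (Fin r) → N :=
  fun U => ∑ l ∈ Uᶜ, ((sg l U * X l : MvPolynomial (Fin r) K)) • c (insert l U)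

lemma kappa_add (c c' : Finset (Fin r) → N) :
    kappa K (c + c') = kappa K c + kappa K c' := by
  funext U
  simp only [kappa, Pi.add_apply, smul_add, Finset.sum_add_distrib]

lemma kappa_zero : kappa K (0 : Finset (Fin r) → N) = 0 := by
  funext U; simp [kappa]

lemma kappa_sub (c c' : Finset (Fin r) → N) :
    kappa K (c - c') = kappa K c - kappa K c' := by
  funext U
  simp only [kappa, Pi.sub_apply, smul_sub, Finset.sum_sub_distrib]

lemma kappa_card {q : ℕ} {c : Finset (Fin r) → N}
    (hc : ∀ U, c U ≠ 0 → U.card = q + 1) :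
    ∀ U, kappa K c U ≠ 0 → U.card = q := by
  intro U hU
  rw [kappa] at hU
  obtain ⟨l, hl, hne⟩ := Finset.exists_ne_zero_of_sum_ne_zero hU
  have : c (insert l U) ≠ 0 := by rintro h; rw [h, smul_zero] at hne; exact hne rfl
  have hcard := hc _ this
  rwa [Finset.card_insert_of_notMem (by simpa using hl), Nat.add_right_cancel_iff] at hcard

lemma kappa_comp_linear {N' : Type} [AddCommGroup N'] [Module (MvPolynomial (Fin r) K) N']
    (φ : N →ₗ[MvPolynomial (Fin r) K] N') (c : Finset (Fin r) → N) :
    kappa K (fun U => φ (c U)) = fun U => φ (kappa K c U) := by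
  funext U
  rw [kappa, kappa, map_sum]
  exact Finset.sum_congr rfl fun l _ => (map_smul φ _ _).symm

lemma kappa_apply_pi {m : ℕ} (c : Finset (Fin r) → (Fin m → MvPolynomial (Fin r) K))
    (U : Finset (Fin r)) (j : Fin m) :
    kappa K c U j = kappa K (fun V => c V j) U := by
  rw [kappa, kappa, Finset.sum_apply]
  rfl

lemma kappa_kappa (c : Finset (Fin r) → N) : kappa K (kappa K c) = 0 := by
  classical
  funext U
  rw [kappa]
  simp only [kappa]
  rw [show (∑ l ∈ Uᶜ, (sg l U * X l) • ∑ m ∈ (insert l U)ᶜ,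
        (sg m (insert l U) * X m) • c (insert m (insert l U)))
      = ∑ l ∈ Uᶜ, ∑ m ∈ Uᶜ.erase l, ((sg l U * X l) * (sg m (insert l U) * X m)) •
          c (insert m (insert l U)) from
    Finset.sum_congr rfl fun l _ => by
      rw [Finset.smul_sum, Finset.compl_insert]
      exact Finset.sum_congr rfl fun m _ => (smul_smul _ _ _)]
  rw [← Finset.sum_sigma (Uᶜ) (fun l => Uᶜ.erase l)
    (fun p => ((sg p.1 U * X p.1) * (sg p.2 (insert p.1 U) * X p.2)) • c (insert p.2 (insert p.1 U)))]
  show _ = (0 : Finset (Fin r) → N) U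
  rw [Pi.zero_apply]
  apply Finset.sum_involution (fun p _ => ⟨p.2, p.1⟩)
  · rintro ⟨l, m⟩ hp
    rw [Finset.mem_sigma, Finset.mem_erase] at hp
    obtain ⟨hl, hml, hm⟩ := hp
    have hlU : l ∉ U := by simpa using hl
    have hmU : m ∉ U := by simpa using hm
    have hsg := sg_antisym (K := K) (Ne.symm hml) hlU hmU
    have hins : insert m (insert l U) = insert l (insert m U) := Finset.insert_comm _ _ _
    rw [hins]
    rw [← add_smul]
    rw [show sg l U * X l * (sg m (insert l U) * X m)
        + sg m U * X m * (sg l (insert m U) * X l)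
        = (sg l U * sg m (insert l U) + sg m U * sg l (insert m U)) * (X l * X m) by ring]
    rw [hsg]
    simp
  · rintro ⟨l, m⟩ hp _
    rw [Finset.mem_sigma, Finset.mem_erase] at hp
    intro hc
    exact hp.2.1 (congrArg Sigma.fst hc)
  · rintro ⟨l, m⟩ hp
    rfl
  · rintro ⟨l, m⟩ hp
    rw [Finset.mem_sigma, Finset.mem_erase] at hp ⊢
    exact ⟨hp.2.2, fun h => hp.2.1 h.symm, hp.1⟩
-- part E : exactness of the Koszul complex on S
lemma KEX (A : Finset (Fin r)) : ∀ (q : ℕ) (c : Finset (Fin r) → MvPolynomial (Fin r) K),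
    1 ≤ q → (∀ U, c U ≠ 0 → U.card = q ∧ U ⊆ A) → kappa K c = 0 →
    ∃ b : Finset (Fin r) → MvPolynomial (Fin r) K,
      (∀ U, b U ≠ 0 → U.card = q + 1 ∧ U ⊆ A) ∧ kappa K b = c := by
  classical
  induction A using Finset.strongInduction with
  | _ A IH =>
  intro q c hq hsupp hcyc
  rcases Finset.eq_empty_or_nonempty A with hA | hA
  · refine ⟨0, fun U hU => absurd rfl hU, ?_⟩
    rw [kappa_zero]
    funext U
    by_contra hne
    have := (hsupp U (fun h => hne h.symm)).2
    rw [hA, Finset.subset_empty] at this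
    have := (hsupp U (fun h => hne h.symm)).1
    simp [‹U = ∅›] at this
    omega
  · set n := A.max' hA with hn
    have hnA : n ∈ A := A.max'_mem hA
    set A' := A.erase n with hA'
    have hssub : A' ⊂ A := Finset.erase_ssubset hnA
    have hnA' : n ∉ A' := Finset.notMem_erase n A
    have hltn : ∀ l ∈ A', l < n := fun l hl =>
      lt_of_le_of_ne (A.le_max' l (Finset.mem_of_mem_erase hl)) (Finset.ne_of_mem_erase hl)
    -- the two slices
    set c1 : Finset (Fin r) → MvPolynomial (Fin r) K :=
      fun V => if n ∈ V then 0 else c (insert n V) with hc1def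
    set c0 : Finset (Fin r) → MvPolynomial (Fin r) K :=
      fun U => if n ∈ U then 0 else c U with hc0def
    have hsupp1 : ∀ V, c1 V ≠ 0 → V.card + 1 = q ∧ V ⊆ A' := by
      intro V hV
      simp only [hc1def] at hV
      by_cases hnV : n ∈ V
      · rw [if_pos hnV] at hV; exact absurd rfl hV
      · rw [if_neg hnV] at hV
        obtain ⟨hcard, hsub⟩ := hsupp _ hV
        constructor
        · rw [Finset.card_insert_of_notMem hnV] at hcard; omega
        · intro x hx
          exact Finset.mem_erase.mpr ⟨fun hxx => hnV (hxx ▸ hx),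
            hsub (Finset.mem_insert_of_mem hx)⟩
    have hsupp0 : ∀ U, c0 U ≠ 0 → U.card = q ∧ U ⊆ A' := by
      intro U hU
      simp only [hc0def] at hU
      by_cases hnU : n ∈ U
      · rw [if_pos hnU] at hU; exact absurd rfl hU
      · rw [if_neg hnU] at hU
        obtain ⟨hcard, hsub⟩ := hsupp _ hU
        exact ⟨hcard, fun x hx => Finset.mem_erase.mpr ⟨fun hxx => hnU (hxx ▸ hx), hsub hx⟩⟩
    -- (F4) : c1 is a cycle
    have hcyc1 : kappa K c1 = 0 := by
      funext W
      rw [Pi.zero_apply]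
      by_cases hw : n ∈ W
      · rw [kappa]
        apply Finset.sum_eq_zero
        intro l hl
        simp only [hc1def, Finset.mem_insert, hw, or_true, if_true, smul_zero]
      · have h0 : kappa K c (insert n W) = 0 := congrFun hcyc (insert n W)
        rw [kappa, Finset.compl_insert] at h0
        rw [kappa]
        rw [← Finset.sum_erase (Wᶜ) (a := n) (f := fun l =>
            ((sg l W * X l : MvPolynomial (Fin r) K)) • c1 (insert l W)) (by
          simp [hc1def])]
        rw [← h0]
        apply Finset.sum_congr rfl
        intro l hl
        have hln : l ≠ n := Finset.ne_of_mem_erase hl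
        have hlW : l ∉ W := by
          have := Finset.mem_of_mem_erase hl; simpa using this
        have hnlW : n ∉ insert l W := by
          simp [hln.symm, hw]
        simp only [hc1def, hnlW, if_false, if_neg]
        rw [Finset.insert_comm l n]
        by_cases hc0' : c (insert n (insert l W)) = 0
        · rw [hc0', smul_zero, smul_zero]
        · have hsub := (hsupp _ hc0').2
          have hlA : l ∈ A := hsub (by simp)
          have hlltn : l < n := lt_of_le_of_ne (A.le_max' l hlA) hln
          rw [sg_insert_of_not_lt (not_lt.mpr hlltn.le) W]
    -- (F5)
    have hF5 : ∀ W, kappa K c0 W = -((sg n W * X n : MvPolynomial (Fin r) K) • c1 W) := by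
      intro W
      by_cases hw : n ∈ W
      · have h1 : c1 W = 0 := by simp [hc1def, hw]
        have h2 : kappa K c0 W = 0 := by
          rw [kappa]
          apply Finset.sum_eq_zero
          intro l hl
          have : c0 (insert l W) = 0 := by
            simp [hc0def, Finset.mem_insert_of_mem hw]
          rw [this, smul_zero]
        rw [h1, h2, smul_zero, neg_zero]
      · have h0 : kappa K c W = 0 := congrFun hcyc W
        rw [kappa] at h0
        have hnWc : n ∈ Wᶜ := by simpa using hw
        rw [← Finset.add_sum_erase _ _ hnWc] at h0
        have hterm : ∀ l ∈ Wᶜ.erase n,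
            ((sg l W * X l : MvPolynomial (Fin r) K)) • c (insert l W)
            = ((sg l W * X l : MvPolynomial (Fin r) K)) • c0 (insert l W) := by
          intro l hl
          have hln : l ≠ n := Finset.ne_of_mem_erase hl
          simp only [hc0def, Finset.mem_insert]
          rw [if_neg (by rintro (h | h); exact hln h.symm; exact hw h)]
        rw [Finset.sum_congr rfl hterm] at h0
        have hext : kappa K c0 W = ∑ l ∈ Wᶜ.erase n,
            ((sg l W * X l : MvPolynomial (Fin r) K)) • c0 (insert l W) := by
          rw [kappa]
          rw [← Finset.sum_erase (Wᶜ) (a := n) (f := fun l =>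
            ((sg l W * X l : MvPolynomial (Fin r) K)) • c0 (insert l W)) (by
            simp [hc0def])]
        rw [hext]
        have : c (insert n W) = c1 W := by simp [hc1def, hw]
        rw [this] at h0
        exact eq_neg_of_add_eq_zero_right h0
    -- obtain b1 with kappa b1 = c1
    have hb1ex : ∃ b1 : Finset (Fin r) → MvPolynomial (Fin r) K,
        (∀ V, b1 V ≠ 0 → V.card = q ∧ V ⊆ A') ∧ kappa K b1 = c1 := by
      rcases Nat.lt_or_ge q 2 with hq2 | hq2
      · -- q = 1 : use the regularity of the variables
        have hq1 : q = 1 := by omega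
        subst hq1
        have hc1supp : ∀ V, V ≠ ∅ → c1 V = 0 := by
          intro V hV
          by_contra h
          obtain ⟨hcard, _⟩ := hsupp1 V h
          exact hV (Finset.card_eq_zero.mp (by omega))
        have h5 := hF5 ∅
        rw [sg_empty, one_mul] at h5
        have hc0sing : ∀ x : Fin r, x ∉ A' → c0 {x} = 0 := by
          intro x hx
          by_contra h
          exact hx ((hsupp0 _ h).2 (Finset.mem_singleton_self x))
        have hk0 : kappa K c0 ∅ = ∑ l ∈ A', X l * c0 {l} := by
          rw [kappa, Finset.compl_empty]
          rw [← Finset.sum_subset (Finset.subset_univ A') (by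
            intro x _ hx
            have hxx : c0 (insert x ∅) = 0 := hc0sing x hx
            rw [hxx, smul_zero])]
          apply Finset.sum_congr rfl
          intro l _
          rw [sg_empty, one_mul, smul_eq_mul]
          rfl
        have hrep : Rep A' (X n * c1 ∅) := by
          refine ⟨fun l => -c0 {l}, ?_⟩
          have : X n * c1 ∅ = - kappa K c0 ∅ := by
            rw [h5]; rw [neg_neg, smul_eq_mul]
          rw [this, hk0, ← Finset.sum_neg_distrib]
          apply Finset.sum_congr rfl
          intro l _
          ring
        obtain ⟨t, ht⟩ := rep_of_smul_rep hnA' hrep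
        refine ⟨fun V => ∑ l ∈ A', if V = {l} then t l else 0, ?_, ?_⟩
        · intro V hV
          obtain ⟨l, hl, hne⟩ := Finset.exists_ne_zero_of_sum_ne_zero hV
          have hVl : V = {l} := by
            by_contra hc; rw [if_neg hc] at hne; exact hne rfl
          subst hVl
          exact ⟨Finset.card_singleton l, Finset.singleton_subset_iff.mpr hl⟩
        · have hsing : ∀ x : Fin r,
              (∑ l ∈ A', if ({x} : Finset (Fin r)) = {l} then t l else 0)
              = if x ∈ A' then t x else 0 := by
            intro x
            rw [show (∑ l ∈ A', if ({x} : Finset (Fin r)) = {l} then t l else 0)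
                = ∑ l ∈ A', if l = x then t l else 0 from
              Finset.sum_congr rfl fun l _ => by
                congr 1
                rw [eq_iff_iff, Finset.singleton_inj, eq_comm]]
            exact Finset.sum_ite_eq' A' x t
          funext W
          rcases Finset.eq_empty_or_nonempty W with hW | hW
          · subst hW
            rw [kappa, Finset.compl_empty]
            have : ∀ l : Fin r,
                ((sg l ∅ * X l : MvPolynomial (Fin r) K)) •
                  (∑ l' ∈ A', if (insert l ∅ : Finset (Fin r)) = {l'} then t l' else 0)
                = X l * (if l ∈ A' then t l else 0) := by
              intro l
              rw [sg_empty, one_mul, smul_eq_mul]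
              congr 1
              exact hsing l
            rw [Finset.sum_congr rfl fun l _ => this l]
            rw [← Finset.sum_subset (Finset.subset_univ A') (by
              intro x _ hx
              rw [if_neg hx, mul_zero])]
            rw [Finset.sum_congr rfl (fun l hl => by rw [if_pos hl])]
            rw [← ht]
          · have hWcard : W.card ≠ 0 := by
              rw [Finset.card_ne_zero]; exact hW
            rw [hc1supp W (by rintro rfl; simp at hWcard)]
            rw [kappa]
            apply Finset.sum_eq_zero
            intro l hl
            have : (∑ l' ∈ A', if (insert l W : Finset (Fin r)) = {l'} then t l' else 0) = 0 := by
              apply Finset.sum_eq_zero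
              intro x _
              rw [if_neg]
              intro hc
              have : (insert l W).card = 1 := by rw [hc]; exact Finset.card_singleton x
              rw [Finset.card_insert_of_notMem (by simpa using hl)] at this
              omega
            rw [this, smul_zero]
      · -- q ≥ 2 : use the inner induction hypothesis
        obtain ⟨qq, rfl⟩ : ∃ qq, q = qq + 1 := ⟨q - 1, by omega⟩
        have hqq : 1 ≤ qq := by omega
        have hsupp1' : ∀ V, c1 V ≠ 0 → V.card = qq ∧ V ⊆ A' := by
          intro V hV
          obtain ⟨h1, h2⟩ := hsupp1 V hV
          exact ⟨by omega, h2⟩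
        exact IH A' hssub qq c1 hqq hsupp1' hcyc1
    obtain ⟨b1, hb1supp, hb1k⟩ := hb1ex
    set b' : Finset (Fin r) → MvPolynomial (Fin r) K :=
      fun U => if n ∈ U then b1 (U.erase n) else 0 with hb'def
    have hb1n : ∀ V, n ∈ V → b1 V = 0 := by
      intro V hV
      by_contra h
      exact hnA' ((hb1supp V h).2 hV)
    have hkb' : ∀ U, n ∈ U → kappa K b' U = c U := by
      intro U hU
      have hU' : n ∉ U.erase n := Finset.notMem_erase n U
      have hins : insert n (U.erase n) = U := Finset.insert_erase hU
      have hstep1 : kappa K b1 (U.erase n) = kappa K b' U := by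
        rw [kappa, kappa, Finset.compl_erase]
        rw [Finset.sum_insert (by simpa using hU)]
        rw [hb1n _ (Finset.mem_insert_self n _), smul_zero, zero_add]
        apply Finset.sum_congr rfl
        intro l hl
        have hlU : l ∉ U := by simpa using hl
        have hln : l ≠ n := fun hc => hlU (by rw [hc]; exact hU)
        have hb'v : b' (insert l U) = b1 (insert l (U.erase n)) := by
          simp only [hb'def]
          rw [if_pos (Finset.mem_insert_of_mem hU), Finset.erase_insert_of_ne hln]
        rw [hb'v]
        by_cases hz : b1 (insert l (U.erase n)) = 0
        · rw [hz, smul_zero, smul_zero]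
        · have hlA : l ∈ A' := (hb1supp _ hz).2 (Finset.mem_insert_self l _)
          have : ¬ n < l := not_lt.mpr (hltn l hlA).le
          rw [show sg (K := K) l (U.erase n) = sg l U from by
            conv_rhs => rw [← hins]
            rw [sg_insert_of_not_lt this]]
      rw [← hstep1, hb1k]
      simp [hc1def, hU', hins]
    have hkb'2 : ∀ U, n ∉ U → kappa K b' U
        = ((sg n U * X n : MvPolynomial (Fin r) K)) • b1 U := by
      intro U hU
      rw [kappa]
      rw [Finset.sum_eq_single n]
      · simp only [hb'def]
        rw [if_pos (Finset.mem_insert_self n U), Finset.erase_insert hU]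
      · intro l hl hln
        have : b' (insert l U) = 0 := by
          simp only [hb'def]
          rw [if_neg (by simp [Ne.symm hln, hU])]
        rw [this, smul_zero]
      · intro hc
        exact absurd (by simpa using hU : n ∈ Uᶜ) hc
    set c' := c - kappa K b' with hc'def
    have hc'cyc : kappa K c' = 0 := by
      rw [hc'def, kappa_sub, hcyc, kappa_kappa, sub_zero]
    have hc'supp : ∀ U, c' U ≠ 0 → U.card = q ∧ U ⊆ A' := by
      intro U hU
      by_cases hnU : n ∈ U
      · exfalso
        apply hU
        rw [hc'def, Pi.sub_apply, hkb' U hnU, sub_self]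
      · have hc'val : c' U = c0 U - ((sg n U * X n : MvPolynomial (Fin r) K)) • b1 U := by
          rw [hc'def, Pi.sub_apply, hkb'2 U hnU]
          congr 1
          simp [hc0def, hnU]
        by_cases hc0z : c0 U = 0
        · have hb1z : b1 U ≠ 0 := by
            intro hz
            apply hU
            rw [hc'val, hc0z, hz, smul_zero, sub_zero]
          exact hb1supp U hb1z
        · exact hsupp0 U hc0z
    obtain ⟨b0, hb0supp, hb0k⟩ := IH A' hssub q c' hq hc'supp hc'cyc
    refine ⟨b' + b0, ?_, ?_⟩
    · intro U hU
      by_cases hbU : b' U = 0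
      · have hb0U : b0 U ≠ 0 := by
          rw [Pi.add_apply, hbU, zero_add] at hU
          exact hU
        obtain ⟨h1, h2⟩ := hb0supp U hb0U
        exact ⟨h1, h2.trans (Finset.erase_subset n A)⟩
      · by_cases hnU : n ∈ U
        · have hb1' : b1 (U.erase n) ≠ 0 := by
            rw [hb'def] at hbU
            simpa [hnU] using hbU
          obtain ⟨h1, h2⟩ := hb1supp _ hb1'
          constructor
          · have := Finset.card_erase_add_one hnU
            omega
          · intro x hx
            by_cases hxn : x = n
            · subst hxn; exact hnA
            · exact Finset.mem_of_mem_erase (h2 (Finset.mem_erase.mpr ⟨hxn, hx⟩))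
        · exfalso
          apply hbU
          simp only [hb'def]
          rw [if_neg hnU]
    · rw [kappa_add, hb0k, hc'def]
      funext U
      simp only [Pi.add_apply, Pi.sub_apply]
      ring
-- Part F: graded structure on free modules
/-- homogeneity of a vector w.r.t. twists `tw`, total degree `e` -/
def HomV {m : ℕ} (tw : Fin m → ℤ) (e : ℤ) (v : Fin m → MvPolynomial (Fin r) K) : Prop :=
  ∀ j, HomP d (e - tw j) (v j)

/-- degreewise projection of a vector -/
def projV {m : ℕ} (tw : Fin m → ℤ) (e : ℤ) (v : Fin m → MvPolynomial (Fin r) K) :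
    Fin m → MvPolynomial (Fin r) K :=
  fun j => projP d (e - tw j) (v j)

lemma homV_projV {m : ℕ} (tw : Fin m → ℤ) (e : ℤ) (v : Fin m → MvPolynomial (Fin r) K) :
    HomV d tw e (projV d tw e v) := fun j => homP_projP d _ _

lemma projV_eq_self {m : ℕ} {tw : Fin m → ℤ} {e : ℤ} {v : Fin m → MvPolynomial (Fin r) K}
    (h : HomV d tw e v) : projV d tw e v = v := by
  funext j; exact projP_eq_self d (h j)

lemma homV_zero {m : ℕ} (tw : Fin m → ℤ) (e : ℤ) :
    HomV d tw e (0 : Fin m → MvPolynomial (Fin r) K) :=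
  fun j => homP_zero d _

lemma homV_sub {m : ℕ} {tw : Fin m → ℤ} {e : ℤ} {v w : Fin m → MvPolynomial (Fin r) K}
    (hv : HomV d tw e v) (hw : HomV d tw e w) : HomV d tw e (v - w) := by
  intro j mo hmo
  rw [Pi.sub_apply, MvPolynomial.coeff_sub] at hmo
  by_cases h1 : coeff mo (v j) = 0
  · by_cases h2 : coeff mo (w j) = 0
    · rw [h1, h2, sub_zero] at hmo; exact absurd rfl hmo
    · exact hw j mo h2
  · exact hv j mo h1

/-- expansion of a linear map between free modules -/
lemma pi_linear_apply {m1 m2 : ℕ}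
    (φ : (Fin m1 → MvPolynomial (Fin r) K) →ₗ[MvPolynomial (Fin r) K]
      (Fin m2 → MvPolynomial (Fin r) K))
    (v : Fin m1 → MvPolynomial (Fin r) K) (j' : Fin m2) :
    φ v j' = ∑ j, v j * φ (Pi.single j 1) j' := by
  conv_lhs => rw [← Finset.univ_sum_single v]
  have h1 : ∀ j : Fin m1, (Pi.single j (v j) : Fin m1 → MvPolynomial (Fin r) K)
      = v j • (Pi.single j (1 : MvPolynomial (Fin r) K) : Fin m1 → MvPolynomial (Fin r) K) := by
    intro j; funext k
    rw [Pi.smul_apply, smul_eq_mul, Pi.single_apply, Pi.single_apply]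
    by_cases h : k = j <;> simp [h]
  rw [Finset.sum_congr rfl fun j _ => h1 j, map_sum, Finset.sum_apply]
  apply Finset.sum_congr rfl
  intro j _
  rw [map_smul]
  rfl

/-- projection commutes with a linear map with homogeneous matrix entries -/
lemma projV_comm_linear {m1 m2 : ℕ} {tw1 : Fin m1 → ℤ} {tw2 : Fin m2 → ℤ}
    {φ : (Fin m1 → MvPolynomial (Fin r) K) →ₗ[MvPolynomial (Fin r) K]
      (Fin m2 → MvPolynomial (Fin r) K)}
    (hent : ∀ (j : Fin m1) (j' : Fin m2) mo,
      coeff mo (φ (Pi.single j 1) j') ≠ 0 → (W d mo : ℤ) = tw1 j - tw2 j')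
    (e : ℤ) (v : Fin m1 → MvPolynomial (Fin r) K) :
    projV d tw2 e (φ v) = φ (projV d tw1 e v) := by
  funext j'
  show projP d (e - tw2 j') (φ v j') = φ (projV d tw1 e v) j'
  rw [pi_linear_apply φ v j', pi_linear_apply φ (projV d tw1 e v) j']
  rw [show (∑ j, v j * φ (Pi.single j 1) j') = ∑ j, φ (Pi.single j 1) j' * v j from
    Finset.sum_congr rfl fun j _ => mul_comm _ _]
  rw [projP_sum]
  apply Finset.sum_congr rfl
  intro j _
  rw [projP_mul_left d (hent j j') (e - tw2 j')]
  rw [show e - tw2 j' - (tw1 j - tw2 j') = e - tw1 j by ring]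
  show φ (Pi.single j 1) j' * projP d (e - tw1 j) (v j)
      = projP d (e - tw1 j) (v j) * φ (Pi.single j 1) j'
  ring

/-- sum of weights over a subset -/
def DS (U : Finset (Fin r)) : ℤ := ∑ l ∈ U, (d l : ℤ)

lemma DS_insert {l : Fin r} {U : Finset (Fin r)} (h : l ∉ U) :
    DS d (insert l U) = (d l : ℤ) + DS d U := Finset.sum_insert h

/-- homogeneity of a Koszul family -/
def HomC {m : ℕ} (tw : Fin m → ℤ) (e : ℤ)
    (c : Finset (Fin r) → (Fin m → MvPolynomial (Fin r) K)) : Prop :=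
  ∀ U, HomV d tw (e - DS d U) (c U)

/-- projection of a Koszul family -/
def projC {m : ℕ} (tw : Fin m → ℤ) (e : ℤ)
    (c : Finset (Fin r) → (Fin m → MvPolynomial (Fin r) K)) :
    Finset (Fin r) → (Fin m → MvPolynomial (Fin r) K) :=
  fun U => projV d tw (e - DS d U) (c U)

lemma homC_projC {m : ℕ} (tw : Fin m → ℤ) (e : ℤ)
    (c : Finset (Fin r) → (Fin m → MvPolynomial (Fin r) K)) :
    HomC d tw e (projC d tw e c) := fun U => homV_projV d tw _ (c U)

lemma projC_eq_self {m : ℕ} {tw : Fin m → ℤ} {e : ℤ}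
    {c : Finset (Fin r) → (Fin m → MvPolynomial (Fin r) K)}
    (h : HomC d tw e c) : projC d tw e c = c := by
  funext U; exact projV_eq_self d (h U)

lemma homP_sgX (l : Fin r) (U : Finset (Fin r)) :
    ∀ mo, coeff mo ((sg l U * X l : MvPolynomial (Fin r) K)) ≠ 0 → (W d mo : ℤ) = d l := by
  intro mo hmo
  have hsg : (sg l U : MvPolynomial (Fin r) K)
      = C ((-1 : K) ^ (U.filter (fun u => u < l)).card) := by
    rw [sg, map_pow, map_neg, map_one]
  rw [hsg, MvPolynomial.coeff_C_mul] at hmo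
  have hX : coeff mo (X l : MvPolynomial (Fin r) K) ≠ 0 := fun h => hmo (by rw [h, mul_zero])
  rw [MvPolynomial.coeff_X'] at hX
  have hmo' : Finsupp.single l 1 = mo := by
    by_contra hc; rw [if_neg hc] at hX; exact hX rfl
  rw [← hmo', W_single]

/-- projection commutes with the Koszul differential -/
lemma projC_kappa {m : ℕ} (tw : Fin m → ℤ) (e : ℤ)
    (c : Finset (Fin r) → (Fin m → MvPolynomial (Fin r) K)) :
    projC d tw e (kappa K c) = kappa K (projC d tw e c) := by
  funext U j
  show projP d (e - DS d U - tw j) (kappa K c U j) = kappa K (projC d tw e c) U j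
  rw [kappa_apply_pi, kappa_apply_pi, kappa, kappa]
  rw [show (∑ l ∈ Uᶜ, ((sg l U * X l : MvPolynomial (Fin r) K)) • (fun V => c V j) (insert l U))
      = ∑ l ∈ Uᶜ, ((sg l U * X l : MvPolynomial (Fin r) K)) * c (insert l U) j from rfl]
  rw [projP_sum]
  apply Finset.sum_congr rfl
  intro l hl
  have hlU : l ∉ U := by simpa using hl
  rw [projP_mul_left d (homP_sgX d l U) _]
  show _ = ((sg l U * X l : MvPolynomial (Fin r) K))
      * projP d (e - DS d (insert l U) - tw j) (c (insert l U) j)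
  congr 1
  rw [DS_insert d hlU]
  ring
-- Part G: graded wrappers
lemma homP_X (l : Fin r) :
    ∀ mo, coeff mo (X l : MvPolynomial (Fin r) K) ≠ 0 → (W d mo : ℤ) = d l := by
  intro mo hmo
  rw [MvPolynomial.coeff_X'] at hmo
  have hmo' : Finsupp.single l 1 = mo := by
    by_contra hc; rw [if_neg hc] at hmo; exact hmo rfl
  rw [← hmo', W_single]

lemma projV_zero {m : ℕ} (tw : Fin m → ℤ) (e : ℤ) :
    projV d tw e (0 : Fin m → MvPolynomial (Fin r) K) = 0 :=
  projV_eq_self d (homV_zero d tw e)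

/-- graded version of the Koszul exactness -/
lemma KEXgraded {m : ℕ} (tw : Fin m → ℤ) (e : ℤ) (q : ℕ) (hq : 1 ≤ q)
    (c : Finset (Fin r) → (Fin m → MvPolynomial (Fin r) K))
    (hsupp : ∀ U, c U ≠ 0 → U.card = q) (hhom : HomC d tw e c)
    (hcyc : kappa K c = 0) :
    ∃ b' : Finset (Fin r) → (Fin m → MvPolynomial (Fin r) K),
      (∀ U, b' U ≠ 0 → U.card = q + 1) ∧ HomC d tw e b' ∧ kappa K b' = c := by
  classical
  have H : ∀ j : Fin m, ∃ bj : Finset (Fin r) → MvPolynomial (Fin r) K,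
      (∀ U, bj U ≠ 0 → U.card = q + 1 ∧ U ⊆ Finset.univ) ∧
      kappa K bj = fun V => c V j := by
    intro j
    apply KEX Finset.univ q (fun V => c V j) hq
    · intro U hU
      exact ⟨hsupp U (fun h => hU (by rw [h]; rfl)), Finset.subset_univ U⟩
    · funext U
      rw [← kappa_apply_pi, hcyc]
      rfl
  choose bb hbsupp hbk using H
  set b0 : Finset (Fin r) → (Fin m → MvPolynomial (Fin r) K) := fun U j => bb j U with hb0
  have hb0k : kappa K b0 = c := by
    funext U j
    rw [kappa_apply_pi]
    have : (fun V => b0 V j) = bb j := rfl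
    rw [this, hbk j]
  have hb0supp : ∀ U, b0 U ≠ 0 → U.card = q + 1 := by
    intro U hU
    obtain ⟨j, hj⟩ := Function.ne_iff.mp hU
    exact (hbsupp j U hj).1
  refine ⟨projC d tw e b0, ?_, homC_projC d tw e b0, ?_⟩
  · intro U hU
    apply hb0supp U
    intro h0
    apply hU
    show projV d tw (e - DS d U) (b0 U) = 0
    rw [h0, projV_zero]
  · rw [← projC_kappa, hb0k, projC_eq_self d hhom]

/-- decomposition of a vector with entries in the maximal ideal -/
lemma split_m {m' : ℕ} (tw : Fin m' → ℤ) (e : ℤ) (z : Fin m' → MvPolynomial (Fin r) K)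
    (hz : HomV d tw e z) (h0 : ∀ j, constantCoeff (z j) = 0) :
    ∃ t : Fin r → (Fin m' → MvPolynomial (Fin r) K),
      (∀ l, HomV d tw (e - d l) (t l)) ∧
      z = ∑ l, (X l : MvPolynomial (Fin r) K) • t l := by
  classical
  have H : ∀ j, ∃ tj : Fin r → MvPolynomial (Fin r) K,
      z j = ∑ l, X l * tj l := by
    intro j
    obtain ⟨t, ht⟩ := rep_univ_of_constantCoeff (h0 j)
    exact ⟨t, ht⟩
  choose t0 ht0 using H
  set raw : Fin r → (Fin m' → MvPolynomial (Fin r) K) := fun l j => t0 j l with hraw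
  have hzraw : z = ∑ l, (X l : MvPolynomial (Fin r) K) • raw l := by
    funext j
    rw [Finset.sum_apply, ht0 j]
    rfl
  refine ⟨fun l => projV d tw (e - d l) (raw l), fun l => homV_projV d tw _ _, ?_⟩
  funext j
  rw [Finset.sum_apply]
  have : ∀ l : Fin r, ((X l : MvPolynomial (Fin r) K) • projV d tw (e - d l) (raw l)) j
      = projP d (e - tw j) (X l * raw l j) := by
    intro l
    show (X l : MvPolynomial (Fin r) K) * projP d (e - (d l : ℤ) - tw j) (raw l j) = _
    rw [projP_mul_left d (homP_X d l) (e - tw j)]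
    congr 1
    ring
  rw [Finset.sum_congr rfl fun l _ => this l, ← projP_sum]
  rw [show (∑ l, (X l : MvPolynomial (Fin r) K) * raw l j) = z j from by
    conv_rhs => rw [hzraw]
    rw [Finset.sum_apply]
    rfl]
  exact (projP_eq_self d (hz j)).symm

/-- the weight of a set of size `i` is at most the sum of the largest `i` weights -/
lemma DS_le (hmono : Antitone d) {i : ℕ} {U : Finset (Fin r)} (hU : U.card = i) :
    DS d U ≤ ∑ l ∈ Finset.range i, if h : l < r then (d ⟨l, h⟩ : ℤ) else 0 := by
  classical
  have hir : i ≤ r := by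
    rw [← hU]
    have := Finset.card_le_univ U
    simpa using this
  set emb := U.orderEmbOfFin hU with hemb
  have hkey : ∀ m : ℕ, ∀ hm : m < i, m ≤ (emb ⟨m, hm⟩ : ℕ) := by
    intro m
    induction m with
    | zero => intro hm; exact Nat.zero_le _
    | succ mm ih =>
        intro hm
        have h1 : mm < i := by omega
        have h2 : (emb ⟨mm, h1⟩ : Fin r) < emb ⟨mm + 1, hm⟩ :=
          emb.strictMono (by rw [Fin.lt_def]; simp)
        have h3 := ih h1
        have h4 : (emb ⟨mm, h1⟩ : ℕ) < (emb ⟨mm + 1, hm⟩ : ℕ) := by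
          rwa [Fin.lt_def] at h2
        omega
  have hDS : DS d U = ∑ k : Fin i, (d (emb k) : ℤ) := by
    rw [DS]
    exact (Finset.sum_bij (fun (k : Fin i) _ => emb k)
      (fun k _ => Finset.orderEmbOfFin_mem U hU k)
      (fun k1 _ k2 _ h => emb.injective h)
      (fun u hu => by
        have hmem : u ∈ Set.range emb := by
          rw [Finset.range_orderEmbOfFin U hU]
          exact hu
        obtain ⟨k, hk⟩ := hmem
        exact ⟨k, Finset.mem_univ k, hk⟩)
      (fun k _ => rfl)).symm
  rw [hDS]
  rw [Finset.sum_range fun l => if h : l < r then (d ⟨l, h⟩ : ℤ) else 0]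
  apply Finset.sum_le_sum
  intro k _
  have hkr : (k : ℕ) < r := lt_of_lt_of_le k.isLt hir
  rw [dif_pos hkr]
  have : d (emb k) ≤ d ⟨k, hkr⟩ := by
    apply hmono
    show (⟨(k : ℕ), hkr⟩ : Fin r) ≤ emb k
    rw [Fin.le_def]
    exact hkey k k.isLt
  exact_mod_cast this
-- Part H: the resolution
lemma pi_linear_apply' {m1 : ℕ} {N : Type} [AddCommGroup N]
    [Module (MvPolynomial (Fin r) K) N]
    (φ : (Fin m1 → MvPolynomial (Fin r) K) →ₗ[MvPolynomial (Fin r) K] N)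
    (v : Fin m1 → MvPolynomial (Fin r) K) :
    φ v = ∑ j, v j • φ (Pi.single j 1) := by
  conv_lhs => rw [← Finset.univ_sum_single v]
  have h1 : ∀ j : Fin m1, (Pi.single j (v j) : Fin m1 → MvPolynomial (Fin r) K)
      = v j • (Pi.single j (1 : MvPolynomial (Fin r) K) : Fin m1 → MvPolynomial (Fin r) K) := by
    intro j; funext k
    rw [Pi.smul_apply, smul_eq_mul, Pi.single_apply, Pi.single_apply]
    by_cases h : k = j <;> simp [h]
  rw [Finset.sum_congr rfl fun j _ => h1 j, map_sum]
  exact Finset.sum_congr rfl fun j _ => map_smul φ _ _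

section Resolution
variable {M : Type} [AddCommGroup M] [Module (MvPolynomial (Fin r) K) M]
variable (b : ℕ → ℕ) (a : ∀ i : ℕ, Fin (b i) → ℤ)
variable (δ : ∀ i : ℕ, (Fin (b (i + 1)) → MvPolynomial (Fin r) K)
      →ₗ[MvPolynomial (Fin r) K] (Fin (b i) → MvPolynomial (Fin r) K))
variable (ε : (Fin (b 0) → MvPolynomial (Fin r) K) →ₗ[MvPolynomial (Fin r) K] M)

/-- `x` is killed by the previous differential (`ε` in degree `0`). -/
def prevZero : (p : ℕ) → (Fin (b p) → MvPolynomial (Fin r) K) → Prop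
  | 0, x => ε x = 0
  | p + 1, x => δ p x = 0

variable {b a δ}

lemma hent (hgradedδ : ∀ (i : ℕ) (j : Fin (b (i + 1))) (j' : Fin (b i)) (mo : Fin r →₀ ℕ),
      coeff mo ((δ i (Pi.single j 1)) j') ≠ 0 →
        ((mo.sum fun l k => d l * k : ℕ) : ℤ) + a i j' = a (i + 1) j)
    (p : ℕ) : ∀ (j : Fin (b (p + 1))) (j' : Fin (b p)) mo,
      coeff mo ((δ p) (Pi.single j 1) j') ≠ 0 → (W d mo : ℤ) = a (p + 1) j - a p j' := by
  intro j j' mo h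
  have := hgradedδ p j j' mo h
  rw [show W d mo = (mo.sum fun l k => d l * k) from rfl]
  omega

lemma projV_δ (hgradedδ : ∀ (i : ℕ) (j : Fin (b (i + 1))) (j' : Fin (b i)) (mo : Fin r →₀ ℕ),
      coeff mo ((δ i (Pi.single j 1)) j') ≠ 0 →
        ((mo.sum fun l k => d l * k : ℕ) : ℤ) + a i j' = a (i + 1) j)
    (p : ℕ) (e : ℤ) (v : Fin (b (p + 1)) → MvPolynomial (Fin r) K) :
    projV d (a p) e (δ p v) = δ p (projV d (a (p + 1)) e v) :=
  projV_comm_linear d (hent d hgradedδ p) e v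

lemma homV_δ (hgradedδ : ∀ (i : ℕ) (j : Fin (b (i + 1))) (j' : Fin (b i)) (mo : Fin r →₀ ℕ),
      coeff mo ((δ i (Pi.single j 1)) j') ≠ 0 →
        ((mo.sum fun l k => d l * k : ℕ) : ℤ) + a i j' = a (i + 1) j)
    {p : ℕ} {e : ℤ} {v : Fin (b (p + 1)) → MvPolynomial (Fin r) K}
    (hv : HomV d (a (p + 1)) e v) : HomV d (a p) e (δ p v) := by
  have h := projV_δ d hgradedδ p e v
  rw [projV_eq_self d hv] at h
  rw [← h]
  exact homV_projV d _ _ _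

lemma glift (hgradedδ : ∀ (i : ℕ) (j : Fin (b (i + 1))) (j' : Fin (b i)) (mo : Fin r →₀ ℕ),
      coeff mo ((δ i (Pi.single j 1)) j') ≠ 0 →
        ((mo.sum fun l k => d l * k : ℕ) : ℤ) + a i j' = a (i + 1) j)
    (p : ℕ) {t : ℤ} {x : Fin (b p) → MvPolynomial (Fin r) K}
    (hx : HomV d (a p) t x) (hxr : x ∈ Set.range (δ p)) :
    ∃ u, δ p u = x ∧ HomV d (a (p + 1)) t u := by
  obtain ⟨u0, hu0⟩ := hxr
  refine ⟨projV d (a (p + 1)) t u0, ?_, homV_projV d _ _ _⟩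
  rw [← projV_δ d hgradedδ, hu0, projV_eq_self d hx]

lemma homC_δ (hgradedδ : ∀ (i : ℕ) (j : Fin (b (i + 1))) (j' : Fin (b i)) (mo : Fin r →₀ ℕ),
      coeff mo ((δ i (Pi.single j 1)) j') ≠ 0 →
        ((mo.sum fun l k => d l * k : ℕ) : ℤ) + a i j' = a (i + 1) j)
    {p : ℕ} {e : ℤ} {c : Finset (Fin r) → (Fin (b (p + 1)) → MvPolynomial (Fin r) K)}
    (hc : HomC d (a (p + 1)) e c) : HomC d (a p) e (fun U => δ p (c U)) :=
  fun U => homV_δ d hgradedδ (hc U)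

lemma homC_kappa {m : ℕ} {tw : Fin m → ℤ} {e : ℤ}
    {c : Finset (Fin r) → (Fin m → MvPolynomial (Fin r) K)}
    (hc : HomC d tw e c) : HomC d tw e (kappa K c) := by
  have h := projC_kappa d tw e c
  rw [projC_eq_self d hc] at h
  rw [← h]
  exact homC_projC d _ _ _

/-- the staircase chase through the double complex -/
lemma stair
    (hexact0 : Function.Exact (δ 0) ε)
    (hexact : ∀ i : ℕ, Function.Exact (δ (i + 1)) (δ i))
    (hgradedδ : ∀ (i : ℕ) (j : Fin (b (i + 1))) (j' : Fin (b i)) (mo : Fin r →₀ ℕ),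
      coeff mo ((δ i (Pi.single j 1)) j') ≠ 0 →
        ((mo.sum fun l k => d l * k : ℕ) : ℤ) + a i j' = a (i + 1) j)
    (i : ℕ) (e : ℤ)
    (hker : ∀ (U : Finset (Fin r)) (x : Fin (b 0) → MvPolynomial (Fin r) K),
      U.card = i → HomV d (a 0) (e - DS d U) x → ε x = 0) :
    ∀ p q, p + q = i → 1 ≤ q →
      ∀ y : Finset (Fin r) → (Fin (b p) → MvPolynomial (Fin r) K),
        (∀ U, y U ≠ 0 → U.card = q) → HomC d (a p) e y →
        (∀ U, prevZero b δ ε p (kappa K y U)) →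
        ∃ (w : Finset (Fin r) → (Fin (b (p + 1)) → MvPolynomial (Fin r) K))
          (v : Finset (Fin r) → (Fin (b p) → MvPolynomial (Fin r) K)),
          (∀ U, w U ≠ 0 → U.card = q) ∧ HomC d (a (p + 1)) e w ∧
          (∀ U, v U ≠ 0 → U.card = q + 1) ∧ HomC d (a p) e v ∧
          y = (fun U => δ p (w U)) + kappa K v := by
  intro p
  induction p with
  | zero =>
      intro q hpq hq y hsupp hhom _
      have H : ∀ U, ∃ u : Fin (b 1) → MvPolynomial (Fin r) K,
          δ 0 u = y U ∧ HomV d (a 1) (e - DS d U) u ∧ (y U = 0 → u = 0) := by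
        intro U
        by_cases h0 : y U = 0
        · exact ⟨0, by rw [map_zero, h0], homV_zero d _ _, fun _ => rfl⟩
        · have hEz : ε (y U) = 0 := hker U (y U) (by have := hsupp U h0; omega) (hhom U)
          have hrange : y U ∈ Set.range (δ 0) := (hexact0 (y U)).mp hEz
          obtain ⟨u, hu1, hu2⟩ := glift d hgradedδ 0 (hhom U) hrange
          exact ⟨u, hu1, hu2, fun h => absurd h h0⟩
      choose w hw1 hw2 hw3 using H
      refine ⟨w, 0, ?_, hw2, ?_, ?_, ?_⟩
      · intro U hU
        apply hsupp U
        intro h0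
        exact hU (hw3 U h0)
      · intro U hU
        exact absurd rfl hU
      · intro U
        exact homV_zero d _ _
      · rw [kappa_zero]
        funext U
        show y U = δ 0 (w U) + 0
        rw [add_zero, hw1 U]
  | succ p IH =>
      intro q hpq hq y hsupp hhom hprev
      -- push down
      set z : Finset (Fin r) → (Fin (b p) → MvPolynomial (Fin r) K) :=
        fun U => δ p (y U) with hzdef
      have hzsupp : ∀ U, z U ≠ 0 → U.card = q := by
        intro U hU
        apply hsupp U
        intro h0
        apply hU
        rw [hzdef]
        show δ p (y U) = 0
        rw [h0, map_zero]
      have hzhom : HomC d (a p) e z := homC_δ d hgradedδ hhom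
      have hzcyc : kappa K z = 0 := by
        funext U
        rw [hzdef]
        have h1 := kappa_comp_linear (K := K) (δ p) y
        have h2 : prevZero b δ ε (p + 1) (kappa K y U) := hprev U
        have h3 : δ p (kappa K y U) = 0 := h2
        rw [show kappa K (fun U => δ p (y U)) U = δ p (kappa K y U) from congrFun h1 U, h3]
        rfl
      obtain ⟨cY, hcYsupp, hcYhom, hcYk⟩ := KEXgraded d (a p) e q hq z hzsupp hzhom hzcyc
      have hcYprev : ∀ U, prevZero b δ ε p (kappa K cY U) := by
        intro U
        rw [hcYk]
        cases p with
        | zero =>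
            show ε (δ 0 (y U)) = 0
            exact hexact0.apply_apply_eq_zero (y U)
        | succ p'' =>
            show δ p'' (δ (p'' + 1) (y U)) = 0
            exact (hexact p'').apply_apply_eq_zero (y U)
      obtain ⟨w', v', hw'supp, hw'hom, hv'supp, hv'hom, hEq⟩ :=
        IH (q + 1) (by omega) (by omega) cY hcYsupp hcYhom hcYprev
      have hzkw : ∀ U, δ p (y U) = δ p (kappa K w' U) := by
        intro U
        have h1 : kappa K cY = fun V => δ p (kappa K w' V) := by
          rw [hEq, kappa_add, kappa_kappa, add_zero, kappa_comp_linear (K := K) (δ p) w']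
        have h2 := congrFun hcYk U
        rw [congrFun h1 U] at h2
        exact h2.symm
      have H : ∀ U, ∃ u : Fin (b (p + 2)) → MvPolynomial (Fin r) K,
          δ (p + 1) u = y U - kappa K w' U ∧ HomV d (a (p + 2)) (e - DS d U) u ∧
          (y U - kappa K w' U = 0 → u = 0) := by
        intro U
        by_cases h0 : y U - kappa K w' U = 0
        · exact ⟨0, by rw [map_zero, h0], homV_zero d _ _, fun _ => rfl⟩
        · have hd0 : δ p (y U - kappa K w' U) = 0 := by
            rw [map_sub, hzkw U, sub_self]
          have hrange : y U - kappa K w' U ∈ Set.range (δ (p + 1)) :=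
            (hexact p (y U - kappa K w' U)).mp hd0
          have hhomsub : HomV d (a (p + 1)) (e - DS d U) (y U - kappa K w' U) :=
            homV_sub d (hhom U) (homC_kappa d hw'hom U)
          obtain ⟨u, hu1, hu2⟩ := glift d hgradedδ (p + 1) hhomsub hrange
          exact ⟨u, hu1, hu2, fun h => absurd h h0⟩
      choose w hw1 hw2 hw3 using H
      refine ⟨w, w', ?_, hw2, ?_, hw'hom, ?_⟩
      · intro U hU
        have hne : y U - kappa K w' U ≠ 0 := fun h => hU (hw3 U h)
        by_cases hy : y U = 0
        · have : kappa K w' U ≠ 0 := by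
            intro h
            exact hne (by rw [hy, h, sub_zero])
          exact kappa_card hw'supp U this
        · exact hsupp U hy
      · intro U hU
        exact hw'supp U hU
      · funext U
        show y U = δ (p + 1) (w U) + kappa K w' U
        rw [hw1 U]
        abel
lemma eps_mem [Module K M] [IsScalarTower K (MvPolynomial (Fin r) K) M]
    (ℳ : ℤ → Submodule K M)
    (hcompat : ∀ (e : ℕ) (x : MvPolynomial (Fin r) K),
      x ∈ weightedHomogeneousSubmodule K d e →
        ∀ (dd : ℤ), ∀ m ∈ ℳ dd, x • m ∈ ℳ (dd + e))
    (hgradedε : ∀ j : Fin (b 0), ε (Pi.single j 1) ∈ ℳ (a 0 j))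
    {t : ℤ} {x : Fin (b 0) → MvPolynomial (Fin r) K}
    (hx : HomV d (a 0) t x) : ε x ∈ ℳ t := by
  rw [pi_linear_apply' ε x]
  apply Submodule.sum_mem
  intro j _
  by_cases h0 : x j = 0
  · rw [h0, zero_smul]
    exact Submodule.zero_mem _
  · obtain ⟨mo₀, hmo₀⟩ := MvPolynomial.ne_zero_iff.mp h0
    have hW0 : (W d mo₀ : ℤ) = t - a 0 j := hx j mo₀ hmo₀
    have hmem : x j ∈ weightedHomogeneousSubmodule K d (W d mo₀) := by
      rw [mem_weightedHomogeneousSubmodule]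
      intro mo hmo
      have h1 := hx j mo hmo
      have h2 : W d mo = W d mo₀ := by omega
      have h3 : (Finsupp.weight d) mo = W d mo := by
        rw [Finsupp.weight_apply]
        apply Finsupp.sum_congr
        intro l _
        rw [smul_eq_mul, mul_comm]
      rw [h3, h2]
    have hres := hcompat (W d mo₀) (x j) hmem (a 0 j) (ε (Pi.single j 1)) (hgradedε j)
    have heq : a 0 j + (W d mo₀ : ℤ) = t := by omega
    rw [heq] at hres
    exact hres

end Resolution
end
end TorAux

open TorAux

/-- **Degree bound for `Tor_i^S(M,K)`, finite length case.**
`S = K[x₁,…,x_r]` is graded with `deg x_i = d_i`, `d₁ ≥ ⋯ ≥ d_r > 0`.  `M` is a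
nonzero finitely generated graded `S`-module of finite length (Noetherian and Artinian,
i.e. Krull dimension `0`), with grading `ℳ`, and `a(M)` is the maximal degree `dd` with
`ℳ dd ≠ 0`.  The graded vector space `Tor_i^S(M,K)` is `F_i ⊗_S K` for the minimal free
graded resolution `⋯ → F₁ → F₀ → M → 0`, encoded below by twists `a i j`
(`F_i = ⊕_{j < b i} S(-a i j)`), exact degree-preserving differentials and minimality.
Then `deg Tor_i^S(M,K) ≤ d₁ + ⋯ + d_i + a(M)`: every twist of `F_i` is bounded by
`d₁ + ⋯ + d_i + a(M)`. -/
theorem tor_degree_bound_finite_length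
    {K : Type} [Field K] {r : ℕ} (d : Fin r → ℕ)
    (hdpos : ∀ i, 0 < d i) (hmono : Antitone d)
    {M : Type} [AddCommGroup M] [Module (MvPolynomial (Fin r) K) M]
    [Module K M] [IsScalarTower K (MvPolynomial (Fin r) K) M]
    [Module.Finite (MvPolynomial (Fin r) K) M] [Nontrivial M]
    [IsNoetherian (MvPolynomial (Fin r) K) M] [IsArtinian (MvPolynomial (Fin r) K) M]
    (ℳ : ℤ → Submodule K M)
    (hdecomp : DirectSum.IsInternal ℳ)
    (hcompat : ∀ (e : ℕ) (x : MvPolynomial (Fin r) K),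
      x ∈ MvPolynomial.weightedHomogeneousSubmodule K d e →
        ∀ (dd : ℤ), ∀ m ∈ ℳ dd, x • m ∈ ℳ (dd + e))
    (aM : ℤ) (haM : IsGreatest {dd : ℤ | ℳ dd ≠ ⊥} aM)
    -- the minimal free graded resolution `⋯ → F₁ → F₀ → M → 0`
    (b : ℕ → ℕ) (a : ∀ i : ℕ, Fin (b i) → ℤ)
    (δ : ∀ i : ℕ, (Fin (b (i + 1)) → MvPolynomial (Fin r) K)
      →ₗ[MvPolynomial (Fin r) K] (Fin (b i) → MvPolynomial (Fin r) K))
    (ε : (Fin (b 0) → MvPolynomial (Fin r) K) →ₗ[MvPolynomial (Fin r) K] M)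
    (hsurj : Function.Surjective ε)
    (hexact0 : Function.Exact (δ 0) ε)
    (hexact : ∀ i : ℕ, Function.Exact (δ (i + 1)) (δ i))
    (hgradedδ : ∀ (i : ℕ) (j : Fin (b (i + 1))) (j' : Fin (b i)) (mo : Fin r →₀ ℕ),
      MvPolynomial.coeff mo ((δ i (Pi.single j 1)) j') ≠ 0 →
        ((mo.sum fun l k => d l * k : ℕ) : ℤ) + a i j' = a (i + 1) j)
    (hgradedε : ∀ j : Fin (b 0), ε (Pi.single j 1) ∈ ℳ (a 0 j))
    (hminδ : ∀ (i : ℕ) (j : Fin (b (i + 1))) (j' : Fin (b i)),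
      MvPolynomial.constantCoeff ((δ i (Pi.single j 1)) j') = 0)
    (hminε : ∀ v : Fin (b 0) → MvPolynomial (Fin r) K,
      ε v = 0 → ∀ j, MvPolynomial.constantCoeff (v j) = 0) :
    ∀ (i : ℕ) (j : Fin (b i)),
      a i j ≤ (∑ l ∈ Finset.range i, if h : l < r then (d ⟨l, h⟩ : ℤ) else 0) + aM := by
  classical
  intro i j0
  by_contra hcon
  push_neg at hcon
  induction i with
  | zero =>
      have hne : ε (Pi.single j0 1) ≠ 0 := by
        intro h
        have hc := hminε _ h j0
        rw [Pi.single_eq_same, map_one] at hc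
        exact one_ne_zero hc
      have hbot : ℳ (a 0 j0) ≠ ⊥ := by
        intro h
        apply hne
        have hm := hgradedε j0
        rw [h] at hm
        simpa using hm
      have hle := haM.2 hbot
      simp at hcon
      omega
  | succ i' _ =>
      set e := a (i' + 1) j0 with he
      have hker : ∀ (U : Finset (Fin r)) (x : Fin (b 0) → MvPolynomial (Fin r) K),
          U.card = i' + 1 → HomV d (a 0) (e - DS d U) x → ε x = 0 := by
        intro U x hU hx
        have hmem := eps_mem d ε ℳ hcompat hgradedε hx
        have hbot : ℳ (e - DS d U) = ⊥ := by
          by_contra hb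
          have h1 := haM.2 hb
          have h2 := DS_le d hmono hU
          rw [he] at h1
          linarith
        rw [hbot] at hmem
        simpa using hmem
      set g : Fin (b (i' + 1)) → MvPolynomial (Fin r) K := Pi.single j0 1 with hgdef
      have hghom : HomV d (a (i' + 1)) e g := by
        intro j mo hmo
        by_cases hj : j = j0
        · subst hj
          rw [hgdef, Pi.single_eq_same, MvPolynomial.coeff_one] at hmo
          have h0 : (0 : Fin r →₀ ℕ) = mo := by
            by_contra hc; rw [if_neg hc] at hmo; exact hmo rfl
          rw [← h0, W_zero]
          simp [he]
        · rw [hgdef, Pi.single_eq_of_ne hj] at hmo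
          simp at hmo
      set z0 : Fin (b i') → MvPolynomial (Fin r) K := δ i' g with hz0def
      have hz0hom : HomV d (a i') e z0 := homV_δ d hgradedδ hghom
      have hz0cc : ∀ j', MvPolynomial.constantCoeff (z0 j') = 0 := fun j' => hminδ i' j0 j'
      obtain ⟨t, hthom, htsum⟩ := split_m d (a i') e z0 hz0hom hz0cc
      set y1 : Finset (Fin r) → (Fin (b i') → MvPolynomial (Fin r) K) :=
        fun V => ∑ l, if V = {l} then t l else 0 with hy1def
      have hy1sing : ∀ x : Fin r, y1 {x} = t x := by
        intro x
        show (∑ l, if ({x} : Finset (Fin r)) = {l} then t l else 0) = t x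
        rw [show (∑ l, if ({x} : Finset (Fin r)) = {l} then t l else 0)
            = ∑ l, if l = x then t l else 0 from
          Finset.sum_congr rfl fun l _ => by
            congr 1
            rw [eq_iff_iff, Finset.singleton_inj, eq_comm]]
        rw [Finset.sum_ite_eq' Finset.univ x t, if_pos (Finset.mem_univ x)]
      have hy1supp : ∀ V, y1 V ≠ 0 → V.card = 1 := by
        intro V hV
        obtain ⟨l, _, hl⟩ := Finset.exists_ne_zero_of_sum_ne_zero hV
        have : V = {l} := by by_contra hc; rw [if_neg hc] at hl; exact hl rfl
        rw [this, Finset.card_singleton]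
      have hy1hom : HomC d (a i') e y1 := by
        intro V
        by_cases hV : ∃ x : Fin r, V = {x}
        · obtain ⟨x, rfl⟩ := hV
          rw [hy1sing x]
          rw [show e - DS d {x} = e - (d x : ℤ) from by
            rw [show DS d {x} = (d x : ℤ) from Finset.sum_singleton _ x]]
          exact hthom x
        · rw [show y1 V = 0 from by
            apply Finset.sum_eq_zero
            intro x _
            rw [if_neg (fun hc => hV ⟨x, hc⟩)]]
          exact homV_zero d _ _
      have hy1kap : ∀ U, kappa K y1 U = if U = ∅ then z0 else 0 := by
        intro U
        by_cases hU : U = ∅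
        · subst hU
          rw [if_pos rfl, kappa, Finset.compl_empty]
          rw [Finset.sum_congr rfl (fun l _ => show
              ((sg l ∅ * X l : MvPolynomial (Fin r) K)) • y1 (insert l ∅)
              = (X l : MvPolynomial (Fin r) K) • t l from by
            rw [sg_empty, one_mul]
            congr 1
            exact hy1sing l)]
          exact htsum.symm
        · rw [if_neg hU, kappa]
          apply Finset.sum_eq_zero
          intro l hl
          have hy0 : y1 (insert l U) = 0 := by
            apply Finset.sum_eq_zero
            intro x _
            rw [if_neg]
            intro hc
            have h1 : (insert l U).card = 1 := by rw [hc]; exact Finset.card_singleton x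
            have h2 : U.card ≠ 0 := by
              rw [Finset.card_ne_zero]
              exact Finset.nonempty_iff_ne_empty.mpr hU
            rw [Finset.card_insert_of_notMem (by simpa using hl)] at h1
            omega
          rw [hy0, smul_zero]
      have hy1prev : ∀ U, prevZero b δ ε i' (kappa K y1 U) := by
        intro U
        rw [hy1kap U]
        by_cases hU : U = ∅
        · rw [if_pos hU, hz0def]
          cases i' with
          | zero => exact hexact0.apply_apply_eq_zero g
          | succ p'' => exact (hexact p'').apply_apply_eq_zero g
        · rw [if_neg hU]
          cases i' with
          | zero => exact map_zero ε
          | succ p'' => exact map_zero (δ p'')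
      obtain ⟨w, v, hwsupp, hwhom, _, _, hEq⟩ :=
        stair d ε hexact0 hexact hgradedδ (i' + 1) e hker i' 1 (by omega) le_rfl
          y1 hy1supp hy1hom hy1prev
      have hkapz : z0 = δ i' ((kappa K w) ∅) := by
        have h1 : kappa K y1 = fun U => δ i' (kappa K w U) := by
          rw [hEq, kappa_add, kappa_kappa, add_zero, kappa_comp_linear (K := K) (δ i') w]
        have h2 := congrFun h1 ∅
        rw [hy1kap ∅, if_pos rfl] at h2
        exact h2
      have hd0 : δ i' (g - kappa K w ∅) = 0 := by
        rw [map_sub, ← hz0def, ← hkapz, sub_self]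
      obtain ⟨u, hu⟩ := (hexact i' (g - kappa K w ∅)).mp hd0
      have h1 : MvPolynomial.constantCoeff ((g - kappa K w ∅) j0) = 1 := by
        rw [Pi.sub_apply, map_sub]
        have hg1 : MvPolynomial.constantCoeff (g j0) = 1 := by
          rw [hgdef, Pi.single_eq_same, map_one]
        have hk0 : MvPolynomial.constantCoeff ((kappa K w ∅) j0) = 0 := by
          rw [kappa_apply_pi, kappa, map_sum]
          apply Finset.sum_eq_zero
          intro l _
          show MvPolynomial.constantCoeff ((sg l ∅ * X l) * w (insert l ∅) j0) = 0
          rw [map_mul, map_mul, MvPolynomial.constantCoeff_X, mul_zero, zero_mul]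
        rw [hg1, hk0, sub_zero]
      have h2 : MvPolynomial.constantCoeff ((δ (i' + 1) u) j0) = 0 := by
        rw [pi_linear_apply (δ (i' + 1)) u j0, map_sum]
        apply Finset.sum_eq_zero
        intro j _
        rw [map_mul, hminδ (i' + 1) j j0, mul_zero]
      rw [hu] at h2
      rw [h1] at h2
      exact one_ne_zero h2
end

section
/- Let G be a finite group, K a field whose characteristic does not divide |G|, V a finite-dimensional representation of G, T = K[V], and f_1,...,f_r a minimal set of homogeneous generators of R = K[V]^G of degrees d_1,...,d_r. Let U = {(w_1,...,w_r) ∈ T[−d_1] ⊕ ... ⊕ T[−d_r] : Σ w_i f_i = 0} be the first syzygy module of f_1,...,f_r over T. Then U is generated as a T-module by its homogeneous elements of degree at most τ_G(V) + 1. -/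
open MvPolynomial Finset

set_option linter.unusedSectionVars false
set_option linter.unusedVariables false
set_option maxHeartbeats 1000000

namespace SyzAux

variable {K : Type} [Field K] {n : ℕ} {G : Type} [Group G] [Fintype G]
  [MulSemiringAction G (MvPolynomial (Fin n) K)]




lemma degree_of_hom {p : MvPolynomial (Fin n) K} {e : ℕ} (hp : p.IsHomogeneous e)
    {m : Fin n →₀ ℕ} (hm : coeff m p ≠ 0) : m.degree = e := by
  rw [Finsupp.degree_eq_weight_one]; exact hp hm

lemma hom_of_degree {p : MvPolynomial (Fin n) K} {e : ℕ}
    (h : ∀ m : Fin n →₀ ℕ, coeff m p ≠ 0 → m.degree = e) : p.IsHomogeneous e := by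
  intro m hm
  show (Finsupp.weight fun _ => (1:ℕ)) m = e
  rw [← Finsupp.degree_eq_weight_one]; exact h m hm

lemma degree_add (a b : Fin n →₀ ℕ) : (a + b).degree = a.degree + b.degree := by
  simp only [Finsupp.degree_eq_weight_one, map_add]

lemma degree_single_one (j : Fin n) : (Finsupp.single j 1).degree = 1 := by
  exact Finsupp.degree_single j 1

lemma hc_mul (c g : MvPolynomial (Fin n) K) {dg : ℕ} (hg : g.IsHomogeneous dg) (e : ℕ) :
    homogeneousComponent e (c * g)
      = if dg ≤ e then homogeneousComponent (e - dg) c * g else 0 := by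
  conv_lhs => rw [← c.sum_homogeneousComponent, Finset.sum_mul, map_sum]
  have key : ∀ k, homogeneousComponent e (homogeneousComponent k c * g)
      = if e = k + dg then homogeneousComponent k c * g else 0 := by
    intro k
    exact homogeneousComponent_of_mem ((homogeneousComponent_isHomogeneous k c).mul hg)
  by_cases hle : dg ≤ e
  · rw [if_pos hle]
    rcases le_or_gt (e - dg) c.totalDegree with h | h
    · rw [Finset.sum_eq_single (e - dg)]
      · rw [key, if_pos (by omega)]
      · intro k _ hk
        rw [key, if_neg (by omega)]
      · intro hmem
        exact absurd (Finset.mem_range.mpr (by omega)) hmem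
    · rw [homogeneousComponent_eq_zero _ _ h, zero_mul]
      apply Finset.sum_eq_zero
      intro k hk
      rw [key, if_neg (by rw [Finset.mem_range] at hk; omega)]
  · rw [if_neg hle]
    apply Finset.sum_eq_zero
    intro k _
    rw [key, if_neg (by omega)]

lemma factA (τ : ℕ) (I : Ideal (MvPolynomial (Fin n) K))
    (hbase : ∀ p : MvPolynomial (Fin n) K, p.IsHomogeneous τ → p ∈ I) :
    ∀ e, τ ≤ e → ∀ p : MvPolynomial (Fin n) K, p.IsHomogeneous e → p ∈ I := by
  intro e he
  induction e, he using Nat.le_induction with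
  | base => exact hbase
  | succ e he IH =>
    intro p hp
    rw [← p.support_sum_monomial_coeff]
    apply Ideal.sum_mem
    intro m hm
    have hdm : m.degree = e + 1 := degree_of_hom hp (mem_support_iff.mp hm)
    obtain ⟨j, hj⟩ : ∃ j, m j ≠ 0 := by
      by_contra h
      push_neg at h
      have : m = 0 := Finsupp.ext h
      rw [this, map_zero] at hdm
      omega
    have hmle : Finsupp.single j 1 ≤ m := by
      rw [Finsupp.single_le_iff]; omega
    have hsplit : m = Finsupp.single j 1 + (m - Finsupp.single j 1) :=
      (add_tsub_cancel_of_le hmle).symm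
    rw [hsplit, monomial_single_add, pow_one]
    apply Ideal.mul_mem_left
    apply IH
    apply isHomogeneous_monomial
    have hadd : (Finsupp.single j 1 + (m - Finsupp.single j 1)).degree
        = (Finsupp.single j 1).degree + (m - Finsupp.single j 1).degree :=
      degree_add _ _
    rw [← hsplit, hdm, degree_single_one] at hadd
    omega





lemma rep {r : ℕ} (f : Fin r → MvPolynomial (Fin n) K) (d : Fin r → ℕ)
    (hfhom : ∀ i, (f i).IsHomogeneous (d i))
    {p : MvPolynomial (Fin n) K} {e : ℕ} (hp : p.IsHomogeneous e)
    (hmem : p ∈ Ideal.span (Set.range f)) :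
    ∃ c : Fin r → MvPolynomial (Fin n) K,
      (∀ i, (c i).IsHomogeneous (e - d i) ∧ (¬ d i ≤ e → c i = 0)) ∧
      ∑ i, c i * f i = p := by
  obtain ⟨c₀, hc₀⟩ := Ideal.mem_span_range_iff_exists_fun.mp hmem
  refine ⟨fun i => if d i ≤ e then homogeneousComponent (e - d i) (c₀ i) else 0, ?_, ?_⟩
  · intro i
    constructor
    · simp only
      split
      · exact homogeneousComponent_isHomogeneous _ _
      · exact isHomogeneous_zero _ _ _
    · intro h
      simp only [if_neg h]
  · have step : ∀ i : Fin r,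
        (if d i ≤ e then homogeneousComponent (e - d i) (c₀ i) else 0) * f i
        = homogeneousComponent e (c₀ i * f i) := by
      intro i
      rw [hc_mul _ _ (hfhom i)]
      split
      · rfl
      · rw [zero_mul]
    rw [Finset.sum_congr rfl fun i _ => step i, ← map_sum, hc₀,
      homogeneousComponent_of_mem hp, if_pos rfl]

lemma decomp {p : MvPolynomial (Fin n) K} {e : ℕ} (hp : p.IsHomogeneous e) (he : 1 ≤ e) :
    ∃ q : Fin n → MvPolynomial (Fin n) K,
      (∀ j, (q j).IsHomogeneous (e - 1)) ∧ ∑ j, X j * q j = p := by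
  have hmem : p ∈ Ideal.span (Set.range (X : Fin n → MvPolynomial (Fin n) K)) := by
    rw [← Set.image_univ, mem_ideal_span_X_image]
    intro m hm
    have hdm : m.degree = e := degree_of_hom hp (mem_support_iff.mp hm)
    obtain ⟨j, hj⟩ : ∃ j, m j ≠ 0 := by
      by_contra h
      push_neg at h
      have : m = 0 := Finsupp.ext h
      rw [this, map_zero] at hdm
      omega
    exact ⟨j, Set.mem_univ j, hj⟩
  obtain ⟨q₀, hq₀⟩ := Ideal.mem_span_range_iff_exists_fun.mp hmem
  refine ⟨fun j => homogeneousComponent (e - 1) (q₀ j),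
    fun j => homogeneousComponent_isHomogeneous _ _, ?_⟩
  have step : ∀ j : Fin n, X j * homogeneousComponent (e - 1) (q₀ j)
      = homogeneousComponent e (q₀ j * X j) := by
    intro j
    rw [hc_mul _ _ (isHomogeneous_X K j), if_pos he, mul_comm]
  rw [Finset.sum_congr rfl fun j _ => step j, ← map_sum, hq₀,
    homogeneousComponent_of_mem hp, if_pos rfl]



lemma koszul (s : Finset (Fin n)) : ∀ (p : Fin n → MvPolynomial (Fin n) K),
    (∀ j, j ∉ s → p j = 0) → (∑ j, X j * p j = 0) →
    ∃ a : Fin n → Fin n → MvPolynomial (Fin n) K,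
      (∀ j k, a j k = - a k j) ∧ (∀ j, a j j = 0) ∧
      (∀ j k, j ∉ s ∨ k ∉ s → a j k = 0) ∧
      (∀ j, p j = ∑ k, X k * a j k) := by
  classical
  induction s using Finset.induction_on with
  | empty =>
    intro p hp _
    exact ⟨0, by simp, by simp, by simp, fun j => by
      simp [hp j (Finset.notMem_empty j)]⟩
  | @insert j₀ s' hj₀ IH =>
    intro p hp hsum
    -- X j₀ * p j₀ lies in the ideal generated by the other variables
    have hXmem : X j₀ * p j₀ ∈ Ideal.span (X '' (↑s' : Set (Fin n)) :
        Set (MvPolynomial (Fin n) K)) := by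
      have hsplit : ∑ j, X j * p j
          = X j₀ * p j₀ + ∑ j ∈ Finset.univ.erase j₀, X j * p j :=
        (Finset.add_sum_erase _ _ (Finset.mem_univ j₀)).symm
      have : X j₀ * p j₀ = - ∑ j ∈ Finset.univ.erase j₀, X j * p j := by
        rw [hsplit] at hsum
        linear_combination hsum
      rw [this]
      apply Submodule.neg_mem
      apply Ideal.sum_mem
      intro j hj
      by_cases hjs : j ∈ s'
      · exact Ideal.mul_mem_right _ _ (Ideal.subset_span ⟨j, hjs, rfl⟩)
      · have : p j = 0 := hp j (by
          intro hmem
          rcases Finset.mem_insert.mp hmem with h | h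
          · exact (Finset.mem_erase.mp hj).1 h
          · exact hjs h)
        rw [this, mul_zero]
        exact Ideal.zero_mem _
    -- hence p j₀ itself does
    have hpmem : p j₀ ∈ Ideal.span (X '' (↑s' : Set (Fin n)) :
        Set (MvPolynomial (Fin n) K)) := by
      rw [mem_ideal_span_X_image] at hXmem ⊢
      intro m hm
      have hcoeff : coeff (m + Finsupp.single j₀ 1) (X j₀ * p j₀) = coeff m (p j₀) := by
        rw [mul_comm, coeff_mul_X]
      have hmem2 : m + Finsupp.single j₀ 1 ∈ (X j₀ * p j₀).support := by
        rw [mem_support_iff, hcoeff]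
        exact mem_support_iff.mp hm
      obtain ⟨i, his, hine⟩ := hXmem _ hmem2
      refine ⟨i, his, ?_⟩
      have hij : i ≠ j₀ := fun h => hj₀ (h ▸ his)
      simpa [Finsupp.single_apply, hij.symm] using hine
    -- explicit representation p j₀ = ∑ k, X k * b k with b supported on s'
    have himg : (X '' (↑s' : Set (Fin n)) : Set (MvPolynomial (Fin n) K))
        = Set.range (fun k : ↥s' => (X (k : Fin n) : MvPolynomial (Fin n) K)) := by
      rw [Set.image_eq_range]
      rfl
    rw [himg, Ideal.mem_span_range_iff_exists_fun] at hpmem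
    obtain ⟨c, hc⟩ := hpmem
    set b : Fin n → MvPolynomial (Fin n) K :=
      fun k => if h : k ∈ s' then c ⟨k, h⟩ else 0 with hb
    have hb0 : ∀ k, k ∉ s' → b k = 0 := by
      intro k hk
      simp only [hb, dif_neg hk]
    have hbj₀ : b j₀ = 0 := hb0 _ hj₀
    have hbrep : ∑ k, X k * b k = p j₀ := by
      rw [← Finset.sum_subset (Finset.subset_univ s')
        (by intro k _ hk; rw [hb0 k hk, mul_zero])]
      rw [← Finset.sum_attach s' (fun k => X k * b k)]
      rw [← hc, Finset.univ_eq_attach]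
      apply Finset.sum_congr rfl
      intro k _
      simp only [hb, dif_pos k.2, Subtype.coe_eta]
      ring
    -- corrected system supported on s'
    set p' : Fin n → MvPolynomial (Fin n) K :=
      fun j => if j = j₀ then 0 else p j + X j₀ * b j with hp'def
    have hp'0 : ∀ j, j ∉ s' → p' j = 0 := by
      intro j hj
      by_cases hjj : j = j₀
      · simp only [hp'def, if_pos hjj]
      · have hpj : p j = 0 := hp j (by
          intro hmem
          rcases Finset.mem_insert.mp hmem with h | h
          · exact hjj h
          · exact hj h)
        simp only [hp'def, if_neg hjj, hpj, hb0 j hj, mul_zero, add_zero, zero_add]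
    have hsum' : ∑ j, X j * p' j = 0 := by
      have key : ∀ j : Fin n, X j * p' j
          = X j * p j + X j₀ * (X j * b j) - (if j = j₀ then X j₀ * p j₀ else 0) := by
        intro j
        by_cases hjj : j = j₀
        · subst hjj
          simp only [hp'def, hbj₀, if_pos rfl]
          simp
        · simp only [hp'def, if_neg hjj]
          ring
      rw [Finset.sum_congr rfl fun j _ => key j]
      rw [Finset.sum_sub_distrib, Finset.sum_add_distrib, hsum, ← Finset.mul_sum, hbrep,
        Finset.sum_ite_eq' Finset.univ j₀ (fun _ => X j₀ * p j₀)]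
      simp
    obtain ⟨a', ha'anti, ha'diag, ha'supp, ha'rep⟩ := IH p' hp'0 hsum'
    refine ⟨fun j k => if j = j₀ then b k else if k = j₀ then -(b j) else a' j k,
      ?_, ?_, ?_, ?_⟩
    · intro j k
      by_cases hjj : j = j₀ <;> by_cases hkk : k = j₀ <;>
        simp [hjj, hkk, hbj₀, ha'anti j k]
    · intro j
      by_cases hjj : j = j₀
      · simp [hjj, hbj₀]
      · simp [hjj, ha'diag j]
    · intro j k hjk
      by_cases hjj : j = j₀
      · subst hjj
        have hk : k ∉ s' := by
          rcases hjk with h | h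
          · exact absurd (Finset.mem_insert_self _ _) h
          · exact fun hk => h (Finset.mem_insert_of_mem hk)
        simp [hb0 k hk]
      · by_cases hkk : k = j₀
        · subst hkk
          have hj : j ∉ s' := by
            rcases hjk with h | h
            · exact fun hj => h (Finset.mem_insert_of_mem hj)
            · exact absurd (Finset.mem_insert_self _ _) h
          simp [hjj, hb0 j hj]
        · simp only [if_neg hjj, if_neg hkk]
          apply ha'supp
          rcases hjk with h | h
          · exact Or.inl fun hj => h (Finset.mem_insert_of_mem hj)
          · exact Or.inr fun hk => h (Finset.mem_insert_of_mem hk)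
    · intro j
      by_cases hjj : j = j₀
      · subst hjj
        rw [← hbrep]
        apply Finset.sum_congr rfl
        intro k _
        simp
      · have ha'j : a' j j₀ = 0 := ha'supp j j₀ (Or.inr hj₀)
        have key : ∀ k : Fin n,
            X k * (if j = j₀ then b k else if k = j₀ then -(b j) else a' j k)
            = X k * a' j k + (if k = j₀ then -(X j₀ * b j) else 0) := by
          intro k
          by_cases hkk : k = j₀
          · subst hkk
            rw [if_neg hjj, if_pos rfl, if_pos rfl, ha'j]
            ring
          · rw [if_neg hjj, if_neg hkk, if_neg hkk, add_zero]
        have : ∑ k, X k * (if j = j₀ then b k else if k = j₀ then -(b j) else a' j k)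
            = ∑ k, (X k * a' j k + (if k = j₀ then -(X j₀ * b j) else 0)) :=
          Finset.sum_congr rfl fun k _ => key k
        rw [show ((fun j k => if j = j₀ then b k else if k = j₀ then -(b j) else a' j k) j)
            = (fun k => if j = j₀ then b k else if k = j₀ then -(b j) else a' j k) from rfl]
        rw [this, Finset.sum_add_distrib,
          Finset.sum_ite_eq' Finset.univ j₀ (fun _ => -(X j₀ * b j)), ← ha'rep j]
        simp only [Finset.mem_univ, if_pos]
        have hp'j : p' j = p j + X j₀ * b j := by rw [hp'def]; simp only [if_neg hjj]
        rw [hp'j]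
        ring



lemma smul_isHomogeneous
    (hC : ∀ (g : G) (c : K),
      g • (MvPolynomial.C c : MvPolynomial (Fin n) K) = MvPolynomial.C c)
    (hX : ∀ (g : G) (i : Fin n),
      g • (MvPolynomial.X i : MvPolynomial (Fin n) K)
        ∈ MvPolynomial.homogeneousSubmodule (Fin n) K 1)
    (g : G) {p : MvPolynomial (Fin n) K} {e : ℕ} (hp : p.IsHomogeneous e) :
    (g • p : MvPolynomial (Fin n) K).IsHomogeneous e := by
  have hgp : g • p = MulSemiringAction.toRingHom G (MvPolynomial (Fin n) K) g p := rfl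
  rw [hgp, ← p.support_sum_monomial_coeff, map_sum]
  apply MvPolynomial.IsHomogeneous.sum
  intro m hm
  have hdm : m.degree = e := by
    rw [Finsupp.degree_eq_weight_one]
    exact hp (mem_support_iff.mp hm)
  rw [monomial_eq, map_mul]
  have h1 : MulSemiringAction.toRingHom G (MvPolynomial (Fin n) K) g (C (coeff m p))
      = C (coeff m p) := hC g _
  rw [h1]
  have h2 : (MulSemiringAction.toRingHom G (MvPolynomial (Fin n) K) g
      (m.prod fun i k => (X i : MvPolynomial (Fin n) K) ^ k)).IsHomogeneous e := by
    rw [Finsupp.prod, map_prod]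
    have h3 := MvPolynomial.IsHomogeneous.prod m.support
      (fun i => MulSemiringAction.toRingHom G (MvPolynomial (Fin n) K) g (X i ^ m i))
      (fun i => m i) ?_
    · rw [show ∑ i ∈ m.support, m i = m.degree from rfl, hdm] at h3
      exact h3
    · intro i _
      rw [map_pow]
      have hx1 : ((MulSemiringAction.toRingHom G (MvPolynomial (Fin n) K) g)
          (X i)).IsHomogeneous 1 := hX g i
      simpa using hx1.pow (m i)
  simpa using h2.C_mul (coeff m p)

lemma smul_ksmul (hC : ∀ (g : G) (c : K),
      g • (MvPolynomial.C c : MvPolynomial (Fin n) K) = MvPolynomial.C c)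
    (g : G) (c : K) (p : MvPolynomial (Fin n) K) :
    g • (c • p) = c • (g • p : MvPolynomial (Fin n) K) := by
  rw [smul_eq_C_mul, smul_eq_C_mul, smul_mul', hC]

variable (G) in
noncomputable def reyn (p : MvPolynomial (Fin n) K) : MvPolynomial (Fin n) K :=
  (Fintype.card G : K)⁻¹ • ∑ g : G, g • p

lemma reyn_invariant (hC : ∀ (g : G) (c : K),
      g • (MvPolynomial.C c : MvPolynomial (Fin n) K) = MvPolynomial.C c)
    (p : MvPolynomial (Fin n) K) (g' : G) : g' • reyn G p = reyn G p := by
  rw [reyn, smul_ksmul hC, Finset.smul_sum]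
  congr 1
  apply Fintype.sum_bijective (fun g : G => g' * g) (Group.mulLeft_bijective g')
  intro x
  rw [mul_smul]

lemma reyn_fixed (hcard : (Fintype.card G : K) ≠ 0)
    {q : MvPolynomial (Fin n) K} (hq : ∀ g : G, g • q = q) : reyn G q = q := by
  rw [reyn]
  rw [Finset.sum_congr rfl fun g _ => hq g, Finset.sum_const, Finset.card_univ,
    ← Nat.cast_smul_eq_nsmul K, smul_smul, inv_mul_cancel₀ hcard, one_smul]

lemma reyn_sum_mul {r : ℕ} (hcard : (Fintype.card G : K) ≠ 0)
    (f : Fin r → MvPolynomial (Fin n) K) (hfinv : ∀ (i : Fin r) (g : G), g • f i = f i)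
    (h : Fin r → MvPolynomial (Fin n) K) :
    reyn G (∑ i, h i * f i) = ∑ i, reyn G (h i) * f i := by
  rw [reyn]
  have step : ∀ g : G, g • (∑ i, h i * f i) = ∑ i, (g • h i) * f i := by
    intro g
    rw [Finset.smul_sum]
    exact Finset.sum_congr rfl fun i _ => by rw [smul_mul', hfinv i g]
  rw [Finset.sum_congr rfl fun g _ => step g, Finset.sum_comm]
  rw [Finset.smul_sum]
  apply Finset.sum_congr rfl
  intro i _
  rw [← Finset.sum_mul, reyn, smul_mul_assoc]

lemma reyn_isHomogeneous (hC : ∀ (g : G) (c : K),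
      g • (MvPolynomial.C c : MvPolynomial (Fin n) K) = MvPolynomial.C c)
    (hX : ∀ (g : G) (i : Fin n),
      g • (MvPolynomial.X i : MvPolynomial (Fin n) K)
        ∈ MvPolynomial.homogeneousSubmodule (Fin n) K 1)
    {p : MvPolynomial (Fin n) K} {e : ℕ} (hp : p.IsHomogeneous e) :
    (reyn G p).IsHomogeneous e := by
  rw [reyn]
  apply Submodule.smul_mem (homogeneousSubmodule (Fin n) K e)
  apply Submodule.sum_mem
  intro g _
  exact smul_isHomogeneous hC hX g hp

lemma reyn_zero : reyn G (0 : MvPolynomial (Fin n) K) = 0 := by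
  simp [reyn]



lemma small_invariant_mem {r : ℕ} (f : Fin r → MvPolynomial (Fin n) K) (d : Fin r → ℕ)
    (hfhom : ∀ i, (f i).IsHomogeneous (d i))
    (hfne : ∀ l, f l ≠ 0) (i : Fin r)
    {p : MvPolynomial (Fin n) K} {e : ℕ}
    (hmem : p ∈ Algebra.adjoin K (Set.range f)) (hp : p.IsHomogeneous e)
    (he : e < d i) :
    p ∈ Algebra.adjoin K (f '' {j | j ≠ i}) := by
  set Q := Algebra.adjoin K (f '' {j | j ≠ i}) with hQ
  have hp' : p ∈ Submodule.span K
      ((Submonoid.closure (Set.range f) : Submonoid (MvPolynomial (Fin n) K)) :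
        Set (MvPolynomial (Fin n) K)) := by
    rw [← Algebra.adjoin_eq_span]
    exact hmem
  have hclos : ∀ m ∈ Submonoid.closure (Set.range f),
      ∃ δ, m.IsHomogeneous δ ∧ m ≠ (0 : MvPolynomial (Fin n) K) ∧ (δ < d i → m ∈ Q) := by
    intro m hm
    induction hm using Submonoid.closure_induction with
    | mem x hx =>
      obtain ⟨l, rfl⟩ := hx
      refine ⟨d l, hfhom l, hfne l, fun hlt => ?_⟩
      have hli : l ≠ i := fun h => by rw [h] at hlt; omega
      exact Algebra.subset_adjoin ⟨l, hli, rfl⟩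
    | one =>
      exact ⟨0, isHomogeneous_one _ _, one_ne_zero, fun _ => Subalgebra.one_mem Q⟩
    | mul x y hx hy ihx ihy =>
      obtain ⟨δ₁, h₁, hne₁, hin₁⟩ := ihx
      obtain ⟨δ₂, h₂, hne₂, hin₂⟩ := ihy
      refine ⟨δ₁ + δ₂, h₁.mul h₂, mul_ne_zero hne₁ hne₂, fun hlt => ?_⟩
      exact Subalgebra.mul_mem Q (hin₁ (by omega)) (hin₂ (by omega))
  have key : Submodule.span K
      ((Submonoid.closure (Set.range f) : Submonoid (MvPolynomial (Fin n) K)) :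
        Set (MvPolynomial (Fin n) K))
      ≤ (Subalgebra.toSubmodule Q).comap
        ((homogeneousComponent e : MvPolynomial (Fin n) K →ₗ[K] MvPolynomial (Fin n) K)) := by
    rw [Submodule.span_le]
    intro m hm
    obtain ⟨δ, hδ, hne, himp⟩ := hclos m hm
    simp only [SetLike.mem_coe, Submodule.mem_comap, Subalgebra.mem_toSubmodule]
    rw [homogeneousComponent_of_mem hδ]
    split
    · next h => exact himp (h ▸ he)
    · exact Subalgebra.zero_mem Q
  have := key hp'
  simp only [Submodule.mem_comap, Subalgebra.mem_toSubmodule] at this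
  rwa [homogeneousComponent_of_mem hp, if_pos rfl] at this


end SyzAux

/-- **The first syzygy module of the generating invariants is generated in degree
`≤ τ_G(V) + 1`.**
`G` is a finite group, `K` a field whose characteristic does not divide `|G|`, and `G`
acts on `T = K[V] = K[y₁,…,y_n]` by graded `K`-algebra automorphisms induced by a
finite-dimensional representation `V`.  Let `f₁,…,f_r` be a minimal set of homogeneous
generators of the invariant ring, `deg f_i = d_i`, let `I = (f₁,…,f_r)T` and let
`τ_G(V)` be the smallest `d` such that every homogeneous polynomial of degree `d` lies
in `I`.  Then the syzygy module
`U = {(w₁,…,w_r) ∈ T[-d₁] ⊕ ⋯ ⊕ T[-d_r] : ∑ w_i f_i = 0}` is generated as a `T`-module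
by its homogeneous elements of (shifted) degree at most `τ_G(V) + 1`; here
`(w₁,…,w_r)` is homogeneous of degree `dd` when each `w_i` is homogeneous of degree
`dd - d_i`. -/
theorem first_syzygy_module_generated_in_low_degree
    {K : Type} [Field K] {G : Type} [Group G] [Fintype G]
    (hG : ¬ (ringChar K ∣ Fintype.card G))
    {n : ℕ} [MulSemiringAction G (MvPolynomial (Fin n) K)]
    (hC : ∀ (g : G) (c : K),
      g • (MvPolynomial.C c : MvPolynomial (Fin n) K) = MvPolynomial.C c)
    (hX : ∀ (g : G) (i : Fin n),
      g • (MvPolynomial.X i : MvPolynomial (Fin n) K)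
        ∈ MvPolynomial.homogeneousSubmodule (Fin n) K 1)
    {r : ℕ} (f : Fin r → MvPolynomial (Fin n) K) (d : Fin r → ℕ)
    (hdpos : ∀ i, 0 < d i)
    (hfhom : ∀ i, (f i).IsHomogeneous (d i))
    (hfinv : ∀ (i : Fin r) (g : G), g • f i = f i)
    (hfgen : (Algebra.adjoin K (Set.range f) : Set (MvPolynomial (Fin n) K))
      = {p | ∀ g : G, g • p = p})
    (hfmin : ∀ i, f i ∉ Algebra.adjoin K (f '' {j | j ≠ i}))
    (I : Ideal (MvPolynomial (Fin n) K)) (hI : I = Ideal.span (Set.range f))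
    (τ : ℕ)
    (hτ : IsLeast {dd : ℕ |
      ∀ p : MvPolynomial (Fin n) K, p.IsHomogeneous dd → p ∈ I} τ)
    (U : Submodule (MvPolynomial (Fin n) K) (Fin r → MvPolynomial (Fin n) K))
    (hU : ∀ w : Fin r → MvPolynomial (Fin n) K, w ∈ U ↔ ∑ i, w i * f i = 0) :
    U = Submodule.span (MvPolynomial (Fin n) K)
      {w : Fin r → MvPolynomial (Fin n) K | (∑ i, w i * f i = 0) ∧
        ∃ dd ≤ τ + 1, ∀ (i : Fin r) (mo : Fin n →₀ ℕ),
          MvPolynomial.coeff mo (w i) ≠ 0 → (mo.sum fun _ k => k) + d i = dd} := by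
  classical
  subst hI
  set S : Set (Fin r → MvPolynomial (Fin n) K) :=
    {w : Fin r → MvPolynomial (Fin n) K | (∑ i, w i * f i = 0) ∧
        ∃ dd ≤ τ + 1, ∀ (i : Fin r) (mo : Fin n →₀ ℕ),
          MvPolynomial.coeff mo (w i) ≠ 0 → (mo.sum fun _ k => k) + d i = dd} with hSdef
  have hcard : (Fintype.card G : K) ≠ 0 := by
    intro h
    exact hG ((CharP.cast_eq_zero_iff K (ringChar K) _).mp h)
  have hfne : ∀ l, f l ≠ 0 := by
    intro l h
    exact hfmin l (h ▸ Subalgebra.zero_mem _)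
  have hIτ : ∀ e, τ ≤ e → ∀ p : MvPolynomial (Fin n) K,
      p.IsHomogeneous e → p ∈ Ideal.span (Set.range f) :=
    SyzAux.factA τ _ hτ.1
  have hinv_adj : ∀ q : MvPolynomial (Fin n) K, (∀ g : G, g • q = q) →
      q ∈ Algebra.adjoin K (Set.range f) := by
    intro q hq
    have : q ∈ (Algebra.adjoin K (Set.range f) : Set (MvPolynomial (Fin n) K)) := by
      rw [hfgen]; exact hq
    exact this
  -- Fact C : every generator has degree at most τ
  have hdle : ∀ i, d i ≤ τ := by
    intro i
    by_contra hgt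
    push_neg at hgt
    obtain ⟨q, hqhom, hqsum⟩ := SyzAux.decomp (hfhom i) (by omega)
    have hqI : ∀ j, q j ∈ Ideal.span (Set.range f) :=
      fun j => hIτ _ (by omega) _ (hqhom j)
    choose b hb1 hb2 using fun j => SyzAux.rep f d hfhom (hqhom j) (hqI j)
    set h : Fin r → MvPolynomial (Fin n) K := fun l => ∑ j, X j * b j l with hh
    have hfi : f i = ∑ l, h l * f l := by
      rw [← hqsum]
      calc ∑ j, X j * q j = ∑ j, X j * ∑ l, b j l * f l := by
            exact Finset.sum_congr rfl fun j _ => by rw [hb2 j]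
        _ = ∑ j, ∑ l, X j * (b j l * f l) := by
            exact Finset.sum_congr rfl fun j _ => by rw [Finset.mul_sum]
        _ = ∑ l, ∑ j, X j * (b j l * f l) := Finset.sum_comm
        _ = ∑ l, h l * f l := by
            refine Finset.sum_congr rfl fun l _ => ?_
            rw [hh]
            simp only
            rw [Finset.sum_mul]
            exact Finset.sum_congr rfl fun j _ => by rw [mul_assoc]
    have hhi : h i = 0 := by
      rw [hh]
      simp only
      apply Finset.sum_eq_zero
      intro j _
      rw [(hb1 j i).2 (by omega), mul_zero]
    have hhl_hom : ∀ l, (h l).IsHomogeneous (d i - d l) := by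
      intro l
      by_cases hld : d l ≤ d i - 1
      · apply MvPolynomial.IsHomogeneous.sum
        intro j _
        have := (isHomogeneous_X K j).mul (hb1 j l).1
        rwa [show 1 + (d i - 1 - d l) = d i - d l from by omega] at this
      · have hz : h l = 0 := by
          rw [hh]
          simp only
          apply Finset.sum_eq_zero
          intro j _
          rw [(hb1 j l).2 hld, mul_zero]
        rw [hz]
        exact isHomogeneous_zero _ _ _
    have hfi2 : f i = ∑ l, SyzAux.reyn G (h l) * f l := by
      calc f i = SyzAux.reyn G (f i) := (SyzAux.reyn_fixed hcard (hfinv i)).symm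
        _ = SyzAux.reyn G (∑ l, h l * f l) := by rw [← hfi]
        _ = ∑ l, SyzAux.reyn G (h l) * f l := SyzAux.reyn_sum_mul hcard f hfinv h
    apply hfmin i
    rw [hfi2]
    apply Subalgebra.sum_mem
    intro l _
    by_cases hli : l = i
    · subst hli
      rw [hhi, SyzAux.reyn_zero, zero_mul]
      exact Subalgebra.zero_mem _
    · apply Subalgebra.mul_mem
      · apply SyzAux.small_invariant_mem f d hfhom hfne i
        · exact hinv_adj _ (SyzAux.reyn_invariant hC _)
        · exact SyzAux.reyn_isHomogeneous hC hX (hhl_hom l)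
        · have := hdpos l; omega
      · exact Algebra.subset_adjoin ⟨l, hli, rfl⟩
  -- main induction : homogeneous syzygies lie in the span
  have main : ∀ dd, ∀ w : Fin r → MvPolynomial (Fin n) K,
      (∑ i, w i * f i = 0) →
      (∀ i mo, coeff mo (w i) ≠ 0 → mo.degree + d i = dd) →
      w ∈ Submodule.span (MvPolynomial (Fin n) K) S := by
    intro dd
    induction dd using Nat.strong_induction_on with
    | _ dd IH =>
    intro w hwsyz hwhom
    by_cases hddle : dd ≤ τ + 1
    · exact Submodule.subset_span ⟨hwsyz, dd, hddle, fun i mo hmo => hwhom i mo hmo⟩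
    · push_neg at hddle
      have hdd2 : τ + 2 ≤ dd := hddle
      have hwihom : ∀ i, (w i).IsHomogeneous (dd - d i) := by
        intro i
        apply SyzAux.hom_of_degree
        intro m hm
        have h1 := hwhom i m hm
        have h2 := hdle i
        omega
      choose wq hwq1 hwq2 using fun i =>
        SyzAux.decomp (hwihom i) (by have := hdle i; omega)
      set p : Fin n → MvPolynomial (Fin n) K := fun j => ∑ i, wq i j * f i with hpdef
      have hphom : ∀ j, (p j).IsHomogeneous (dd - 1) := by
        intro j
        apply MvPolynomial.IsHomogeneous.sum
        intro i _
        have := (hwq1 i j).mul (hfhom i)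
        rwa [show dd - d i - 1 + d i = dd - 1 from by have := hdle i; omega] at this
      have hpsum : ∑ j, X j * p j = 0 := by
        calc ∑ j, X j * p j = ∑ j, ∑ i, X j * (wq i j * f i) :=
              Finset.sum_congr rfl fun j _ => by rw [hpdef]; exact Finset.mul_sum _ _ _
          _ = ∑ i, ∑ j, X j * (wq i j * f i) := Finset.sum_comm
          _ = ∑ i, (∑ j, X j * wq i j) * f i := by
              refine Finset.sum_congr rfl fun i _ => ?_
              rw [Finset.sum_mul]
              exact Finset.sum_congr rfl fun j _ => by rw [mul_assoc]
          _ = ∑ i, w i * f i := Finset.sum_congr rfl fun i _ => by rw [hwq2 i]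
          _ = 0 := hwsyz
      obtain ⟨a, haanti, hadiag, -, harep⟩ :=
        SyzAux.koszul (K := K) Finset.univ p (fun j hj => absurd (Finset.mem_univ j) hj) hpsum
      set a' : Fin n → Fin n → MvPolynomial (Fin n) K :=
        fun j k => homogeneousComponent (dd - 2) (a j k) with ha'def
      have ha'anti : ∀ j k, a' j k = - a' k j := by
        intro j k
        rw [ha'def]
        simp only
        rw [haanti j k, map_neg]
      have ha'diag : ∀ j, a' j j = 0 := by
        intro j
        rw [ha'def]
        simp only
        rw [hadiag j, map_zero]
      have ha'hom : ∀ j k, (a' j k).IsHomogeneous (dd - 2) :=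
        fun j k => homogeneousComponent_isHomogeneous _ _
      have ha'rep : ∀ j, p j = ∑ k, X k * a' j k := by
        intro j
        calc p j = homogeneousComponent (dd - 1) (p j) := by
              rw [homogeneousComponent_of_mem (hphom j), if_pos rfl]
          _ = homogeneousComponent (dd - 1) (∑ k, X k * a j k) := by rw [← harep j]
          _ = ∑ k, homogeneousComponent (dd - 1) (a j k * X k) := by
              rw [map_sum]
              exact Finset.sum_congr rfl fun k _ => by rw [mul_comm]
          _ = ∑ k, X k * a' j k := by
              refine Finset.sum_congr rfl fun k _ => ?_
              rw [SyzAux.hc_mul _ _ (isHomogeneous_X K k), if_pos (by omega : 1 ≤ dd - 1),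
                show dd - 1 - 1 = dd - 2 from by omega, mul_comm]
      have ha'I : ∀ j k, a' j k ∈ Ideal.span (Set.range f) :=
        fun j k => hIτ _ (by omega) _ (ha'hom j k)
      choose b hb1 hb2 using fun j k => SyzAux.rep f d hfhom (ha'hom j k) (ha'I j k)
      set B : Fin r → Fin n → Fin n → MvPolynomial (Fin n) K := fun i j k =>
        if j < k then b j k i else if k < j then -(b k j i) else 0 with hBdef
      have hBdiag : ∀ i j, B i j j = 0 := by
        intro i j
        simp [hBdef]
      have hBanti : ∀ i j k, B i k j = - B i j k := by
        intro i j k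
        rcases lt_trichotomy j k with h | h | h
        · simp [hBdef, h, not_lt_of_gt h]
        · subst h
          simp [hBdef]
        · simp [hBdef, h, not_lt_of_gt h]
      have hBhom : ∀ i j k, (B i j k).IsHomogeneous (dd - 2 - d i) := by
        intro i j k
        rcases lt_trichotomy j k with h | h | h
        · simp only [hBdef, if_pos h]
          exact (hb1 j k i).1
        · subst h
          rw [hBdiag]
          exact isHomogeneous_zero _ _ _
        · simp only [hBdef, if_neg (not_lt_of_gt h), if_pos h]
          exact ((hb1 k j i).1).neg
      have hBsum : ∀ j k, ∑ i, B i j k * f i = a' j k := by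
        intro j k
        rcases lt_trichotomy j k with h | h | h
        · calc ∑ i, B i j k * f i = ∑ i, b j k i * f i := by
                refine Finset.sum_congr rfl fun i _ => ?_
                simp only [hBdef, if_pos h]
            _ = a' j k := hb2 j k
        · subst h
          calc ∑ i, B i j j * f i = ∑ i, (0 : MvPolynomial (Fin n) K) * f i := by
                refine Finset.sum_congr rfl fun i _ => ?_
                rw [hBdiag]
            _ = 0 := by simp
            _ = a' j j := (ha'diag j).symm
        · calc ∑ i, B i j k * f i = ∑ i, -(b k j i * f i) := by
                refine Finset.sum_congr rfl fun i _ => ?_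
                simp only [hBdef, if_neg (not_lt_of_gt h), if_pos h, neg_mul]
            _ = -(∑ i, b k j i * f i) := by rw [Finset.sum_neg_distrib]
            _ = -(a' k j) := by rw [hb2 k j]
            _ = a' j k := (ha'anti j k).symm
      set u : Fin r → Fin n → MvPolynomial (Fin n) K :=
        fun i j => ∑ k, X k * B i j k with hudef
      have husum : ∀ j, ∑ i, u i j * f i = p j := by
        intro j
        calc ∑ i, u i j * f i = ∑ i, ∑ k, (X k * B i j k) * f i := by
              refine Finset.sum_congr rfl fun i _ => ?_
              rw [hudef]
              simp only
              rw [Finset.sum_mul]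
          _ = ∑ k, ∑ i, (X k * B i j k) * f i := Finset.sum_comm
          _ = ∑ k, X k * a' j k := by
              refine Finset.sum_congr rfl fun k _ => ?_
              rw [← hBsum j k, Finset.mul_sum]
              exact Finset.sum_congr rfl fun i _ => by rw [mul_assoc]
          _ = p j := (ha'rep j).symm
      have huhom : ∀ i j, (u i j).IsHomogeneous (dd - 1 - d i) := by
        intro i j
        apply MvPolynomial.IsHomogeneous.sum
        intro k _
        have := (isHomogeneous_X K k).mul (hBhom i j k)
        rwa [show 1 + (dd - 2 - d i) = dd - 1 - d i from by
          have := hdle i; omega] at this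
      set v : Fin n → Fin r → MvPolynomial (Fin n) K :=
        fun j i => wq i j - u i j with hvdef
      have hvsyz : ∀ j, ∑ i, v j i * f i = 0 := by
        intro j
        calc ∑ i, v j i * f i = ∑ i, (wq i j * f i - u i j * f i) := by
              refine Finset.sum_congr rfl fun i _ => ?_
              rw [hvdef]
              simp only
              rw [sub_mul]
          _ = (∑ i, wq i j * f i) - ∑ i, u i j * f i := Finset.sum_sub_distrib _ _
          _ = p j - p j := by rw [husum j, hpdef]
          _ = 0 := sub_self _
      have hvhom : ∀ j i mo, coeff mo (v j i) ≠ 0 → mo.degree + d i = dd - 1 := by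
        intro j i mo hmo
        have h1 : (v j i).IsHomogeneous (dd - 1 - d i) := by
          rw [hvdef]
          simp only
          have hw' := hwq1 i j
          rw [show dd - d i - 1 = dd - 1 - d i from by omega] at hw'
          exact hw'.sub (huhom i j)
        have h2 := SyzAux.degree_of_hom h1 hmo
        have h3 := hdle i
        omega
      have hvmem : ∀ j, v j ∈ Submodule.span (MvPolynomial (Fin n) K) S :=
        fun j => IH (dd - 1) (by omega) (v j) (hvsyz j) (hvhom j)
      have hweq : w = ∑ j, (X j : MvPolynomial (Fin n) K) • v j := by
        funext i
        rw [Finset.sum_apply]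
        simp only [Pi.smul_apply, smul_eq_mul]
        have hzero : ∑ j, X j * u i j = 0 := by
          have expand : ∑ j, X j * u i j
              = ∑ x ∈ Finset.univ ×ˢ Finset.univ, X x.1 * (X x.2 * B i x.1 x.2) := by
            rw [Finset.sum_product]
            refine Finset.sum_congr rfl fun j _ => ?_
            rw [hudef]
            simp only
            rw [Finset.mul_sum]
          rw [expand]
          apply Finset.sum_ninvolution Prod.swap
          · intro x
            have hswap : B i x.2 x.1 = - B i x.1 x.2 := hBanti i x.1 x.2
            simp only [Prod.fst_swap, Prod.snd_swap]
            rw [hswap]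
            ring
          · intro x hx heq
            apply hx
            have h12 : x.2 = x.1 := by
              have := congrArg Prod.fst heq
              simpa using this
            rw [h12, hBdiag, mul_zero, mul_zero]
          · intro x
            exact Finset.mem_product.mpr ⟨Finset.mem_univ _, Finset.mem_univ _⟩
          · intro x
            exact Prod.swap_swap x
        calc w i = ∑ j, X j * wq i j := (hwq2 i).symm
          _ = (∑ j, X j * wq i j) - ∑ j, X j * u i j := by rw [hzero, sub_zero]
          _ = ∑ j, (X j * wq i j - X j * u i j) := (Finset.sum_sub_distrib _ _).symm
          _ = ∑ j, X j * v j i := by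
              refine Finset.sum_congr rfl fun j _ => ?_
              rw [hvdef]
              simp only
              rw [mul_sub]
      rw [hweq]
      exact Submodule.sum_mem _ fun j _ =>
        Submodule.smul_mem _ _ (hvmem j)
  -- conclude
  refine le_antisymm ?_ (Submodule.span_le.mpr fun w hw => (hU w).mpr hw.1)
  intro w hw
  have hwsyz : ∑ i, w i * f i = 0 := (hU w).mp hw
  set N : ℕ := (Finset.univ.sup fun i => (w i).totalDegree + d i) + 1 with hN
  set wc : ℕ → Fin r → MvPolynomial (Fin n) K := fun dd i =>
    if d i ≤ dd then homogeneousComponent (dd - d i) (w i) else 0 with hwcdef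
  have hNbound : ∀ i' : Fin r, (w i').totalDegree + d i' < N := by
    intro i'
    have h1 : (w i').totalDegree + d i' ≤ Finset.univ.sup fun i' => (w i').totalDegree + d i' :=
      Finset.le_sup (f := fun i' => (w i').totalDegree + d i') (Finset.mem_univ i')
    omega
  have hwc_syz : ∀ dd, ∑ i, wc dd i * f i = 0 := by
    intro dd
    calc ∑ i, wc dd i * f i = ∑ i, homogeneousComponent dd (w i * f i) := by
          refine Finset.sum_congr rfl fun i _ => ?_
          rw [hwcdef]
          simp only
          rw [SyzAux.hc_mul _ _ (hfhom i)]
          split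
          · rfl
          · rw [zero_mul]
      _ = homogeneousComponent dd (∑ i, w i * f i) := by rw [map_sum]
      _ = 0 := by rw [hwsyz, map_zero]
  have hwc_hom : ∀ dd i mo, coeff mo (wc dd i) ≠ 0 → mo.degree + d i = dd := by
    intro dd i mo hmo
    rw [hwcdef] at hmo
    simp only at hmo
    by_cases hle : d i ≤ dd
    · rw [if_pos hle] at hmo
      have := SyzAux.degree_of_hom
        (homogeneousComponent_isHomogeneous (dd - d i) (w i)) hmo
      omega
    · rw [if_neg hle, coeff_zero] at hmo
      exact absurd rfl hmo
  have hsum_wc : ∑ dd ∈ Finset.range N, wc dd = w := by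
    funext i
    rw [Finset.sum_apply]
    have hfilter : ∑ dd ∈ Finset.range N, wc dd i
        = ∑ dd ∈ (Finset.range N).filter (fun dd => d i ≤ dd),
            homogeneousComponent (dd - d i) (w i) := by
      rw [Finset.sum_filter]
    rw [hfilter]
    have hbij : ∑ dd ∈ (Finset.range N).filter (fun dd => d i ≤ dd),
        homogeneousComponent (dd - d i) (w i)
        = ∑ e ∈ Finset.range (N - d i), homogeneousComponent e (w i) := by
      apply Finset.sum_nbij' (fun dd => dd - d i) (fun e => e + d i)
      · intro dd hdd
        simp only [Finset.mem_filter, Finset.mem_range] at hdd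
        rw [Finset.mem_range]
        omega
      · intro e he
        rw [Finset.mem_range] at he
        simp only [Finset.mem_filter, Finset.mem_range]
        have := hNbound i
        omega
      · intro dd hdd
        simp only [Finset.mem_filter, Finset.mem_range] at hdd
        omega
      · intro e he
        omega
      · intro dd hdd
        rfl
    rw [hbij]
    have hlt : (w i).totalDegree < N - d i := by
      have := hNbound i
      omega
    calc ∑ e ∈ Finset.range (N - d i), homogeneousComponent e (w i)
        = ∑ e ∈ Finset.range ((w i).totalDegree + 1), homogeneousComponent e (w i) := by
          refine (Finset.sum_subset ?_ ?_).symm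
          · intro e he
            rw [Finset.mem_range] at he ⊢
            omega
          · intro e _ he
            rw [Finset.mem_range] at he
            exact homogeneousComponent_eq_zero _ _ (by omega)
      _ = w i := sum_homogeneousComponent _
  rw [← hsum_wc]
  exact Submodule.sum_mem _ fun dd _ => main dd (wc dd) (hwc_syz dd) (hwc_hom dd)
end

section
/- Let K be a field, n ≥ 1, m ≥ 1, let 𝓜 be the set of monomials of degree m in K[y_1,...,y_n], and let φ: K[{x_M}_{M∈𝓜}] → K[y_1,...,y_n] be the K-algebra homomorphism sending x_M to M. Then the kernel J of φ is generated by the binomials x_{y_i M} x_{y_j N} − x_{y_j M} x_{y_i N}, where M and N range over monomials of degree m−1 and 1 ≤ i, j ≤ n; in particular, J is generated by elements that are quadratic in the variables {x_M}. -/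
open MvPolynomial

namespace VerAux
variable {K : Type} [Field K] {n m : ℕ}

abbrev Vr (n m : ℕ) := {s : Fin n →₀ ℕ // (s.sum fun _ k => k) = m}

noncomputable def ψ (a : Vr n m →₀ ℕ) : Fin n →₀ ℕ := a.sum fun v k => k • v.1
def Deg (f : Fin n →₀ ℕ) : ℕ := f.sum fun _ k => k
def degA (a : Vr n m →₀ ℕ) : ℕ := a.sum fun _ k => k
def agree (v w : Vr n m) : ℕ := ∑ i : Fin n, min (v.1 i) (w.1 i)

lemma Deg_add (f g : Fin n →₀ ℕ) : Deg (f + g) = Deg f + Deg g :=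
  Finsupp.sum_add_index' (fun _ => rfl) (fun _ _ _ => rfl)
lemma Deg_single (i : Fin n) (k : ℕ) : Deg (Finsupp.single i k) = k :=
  Finsupp.sum_single_index rfl
lemma degA_add (a b : Vr n m →₀ ℕ) : degA (a + b) = degA a + degA b :=
  Finsupp.sum_add_index' (fun _ => rfl) (fun _ _ _ => rfl)
lemma degA_single (v : Vr n m) (k : ℕ) : degA (Finsupp.single v k) = k :=
  Finsupp.sum_single_index rfl
lemma ψ_add (a b : Vr n m →₀ ℕ) : ψ (a + b) = ψ a + ψ b :=
  Finsupp.sum_add_index' (fun _ => zero_smul _ _) (fun _ b₁ b₂ => add_smul b₁ b₂ _)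
lemma ψ_single (v : Vr n m) (k : ℕ) : ψ (Finsupp.single v k) = k • v.1 :=
  Finsupp.sum_single_index (zero_smul _ _)
lemma Deg_val (v : Vr n m) : Deg v.1 = m := v.2
lemma Deg_smul (v : Vr n m) (k : ℕ) : Deg (k • v.1) = k * m := by
  induction k with
  | zero => simp [Deg]
  | succ k ih2 => rw [succ_nsmul, Deg_add, ih2, Deg_val]; ring

lemma Deg_ψ (a : Vr n m →₀ ℕ) : Deg (ψ a) = m * degA a := by
  induction a using Finsupp.induction with
  | zero => simp [ψ, degA, Deg]
  | single_add v k a hv hk ih =>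
      have hd : degA (Finsupp.single v k) = k := by
        simp [degA, Finsupp.sum_single_index]
      rw [ψ_add, Deg_add, degA_add, ih, ψ_single, hd, Deg_smul]; ring

lemma ψ_apply (a : Vr n m →₀ ℕ) (i : Fin n) : ψ a i = a.sum fun v k => k * v.1 i := by
  rw [ψ, Finsupp.sum_apply]; rfl

lemma exists_coord (c : Vr n m →₀ ℕ) (i : Fin n) (h : ψ c i ≠ 0) :
    ∃ u ∈ c.support, u.1 i ≠ 0 := by
  by_contra hcon
  push_neg at hcon
  apply h
  rw [ψ_apply, Finsupp.sum]
  exact Finset.sum_eq_zero fun u hu => by rw [hcon u hu, mul_zero]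

lemma Deg_eq_sum (f : Fin n →₀ ℕ) : Deg f = ∑ i : Fin n, f i :=
  Finsupp.sum_fintype _ _ (fun _ => rfl)

lemma sum_val (v : Vr n m) : ∑ i : Fin n, v.1 i = m := by
  rw [← Deg_eq_sum]; exact v.2

lemma agree_le (v w : Vr n m) : agree v w ≤ m := by
  calc agree v w ≤ ∑ i : Fin n, v.1 i :=
        Finset.sum_le_sum fun i _ => min_le_left _ _
    _ = m := sum_val v

lemma agree_eq (v w : Vr n m) (h : agree v w = m) : w = v := by
  have hs : ∑ i : Fin n, min (v.1 i) (w.1 i) = ∑ i : Fin n, v.1 i := by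
    rw [sum_val]; exact h
  have h1 := (Finset.sum_eq_sum_iff_of_le (fun (i : Fin n) _ => min_le_left (v.1 i) (w.1 i))).mp hs
  have hs2 : ∑ i : Fin n, min (v.1 i) (w.1 i) = ∑ i : Fin n, w.1 i := by
    rw [sum_val]; exact h
  have h2 := (Finset.sum_eq_sum_iff_of_le (fun (i : Fin n) _ => min_le_right (v.1 i) (w.1 i))).mp hs2
  apply Subtype.ext
  ext i
  have e1 := h1 i (Finset.mem_univ i)
  have e2 := h2 i (Finset.mem_univ i)
  simp only [min_def] at e1 e2
  split_ifs at e1 e2 <;> omega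

lemma agree_lt_left (v w : Vr n m) (h : agree v w < m) : ∃ i, w.1 i < v.1 i := by
  by_contra hcon
  push_neg at hcon
  have h2 : agree v w = ∑ i : Fin n, v.1 i :=
    Finset.sum_congr rfl fun i _ => min_eq_left (hcon i)
  rw [sum_val] at h2
  omega

lemma agree_lt_right (v w : Vr n m) (h : agree v w < m) : ∃ j, v.1 j < w.1 j := by
  by_contra hcon
  push_neg at hcon
  have h2 : agree v w = ∑ i : Fin n, w.1 i :=
    Finset.sum_congr rfl fun i _ => min_eq_right (hcon i)
  rw [sum_val] at h2
  omega

def Sgen (K : Type) [Field K] (n m : ℕ) : Set (MvPolynomial (Vr n m) K) :=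
  {q | ∃ (s t : Fin n →₀ ℕ) (i j : Fin n)
        (_ : (s.sum fun _ k => k) = m - 1) (_ : (t.sum fun _ k => k) = m - 1)
        (h1 : ((s + Finsupp.single i 1).sum fun _ k => k) = m)
        (h2 : ((t + Finsupp.single j 1).sum fun _ k => k) = m)
        (h3 : ((s + Finsupp.single j 1).sum fun _ k => k) = m)
        (h4 : ((t + Finsupp.single i 1).sum fun _ k => k) = m),
        q = X ⟨s + Finsupp.single i 1, h1⟩ * X ⟨t + Finsupp.single j 1, h2⟩
          - X ⟨s + Finsupp.single j 1, h3⟩ * X ⟨t + Finsupp.single i 1, h4⟩}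

lemma X_eq_monomial (v : Vr n m) :
    (X v : MvPolynomial (Vr n m) K) = monomial (Finsupp.single v 1) 1 := rfl

lemma rel_addright {I : Ideal (MvPolynomial (Vr n m) K)} {a b : Vr n m →₀ ℕ}
    (c : Vr n m →₀ ℕ) (h : monomial a (1:K) - monomial b 1 ∈ I) :
    monomial (c + a) (1:K) - monomial (c + b) 1 ∈ I := by
  have : monomial (c + a) (1:K) - monomial (c + b) 1
      = monomial c 1 * (monomial a 1 - monomial b 1) := by
    rw [mul_sub, monomial_mul, monomial_mul, one_mul]
  rw [this]
  exact I.mul_mem_left _ h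

/-- degree of `x - eᵢ + eⱼ` is again `m` when `x i ≠ 0`. -/
lemma mk_deg (hm : 1 ≤ m) (x : Vr n m) (i j : Fin n) (hxi : x.1 i ≠ 0) :
    ((x.1 - Finsupp.single i 1 + Finsupp.single j 1).sum fun _ k => k) = m := by
  have hle : Finsupp.single i 1 ≤ x.1 :=
    Finsupp.single_le_iff.mpr (Nat.one_le_iff_ne_zero.mpr hxi)
  have hc : x.1 - Finsupp.single i 1 + Finsupp.single i 1 = x.1 := tsub_add_cancel_of_le hle
  have hD := congrArg Deg hc
  rw [Deg_add, Deg_single, Deg_val] at hD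
  show Deg _ = m
  rw [Deg_add, Deg_single]
  omega

lemma base_move (hm : 1 ≤ m) (v w v' w' : Vr n m) (i j : Fin n)
    (hvi : v.1 i ≠ 0) (hwj : w.1 j ≠ 0)
    (hv' : v'.1 = v.1 - Finsupp.single i 1 + Finsupp.single j 1)
    (hw' : w'.1 = w.1 - Finsupp.single j 1 + Finsupp.single i 1) :
    monomial (Finsupp.single v 1 + Finsupp.single w 1) (1:K)
      - monomial (Finsupp.single v' 1 + Finsupp.single w' 1) 1 ∈ Ideal.span (Sgen K n m) := by
  set s := v.1 - Finsupp.single i 1 with hs_def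
  set t := w.1 - Finsupp.single j 1 with ht_def
  have hsv : s + Finsupp.single i 1 = v.1 :=
    tsub_add_cancel_of_le (Finsupp.single_le_iff.mpr (Nat.one_le_iff_ne_zero.mpr hvi))
  have htw : t + Finsupp.single j 1 = w.1 :=
    tsub_add_cancel_of_le (Finsupp.single_le_iff.mpr (Nat.one_le_iff_ne_zero.mpr hwj))
  have hDs : Deg s + 1 = m := by
    have := congrArg Deg hsv
    rw [Deg_add, Deg_single] at this
    rw [this]; exact v.2
  have hDt : Deg t + 1 = m := by
    have := congrArg Deg htw
    rw [Deg_add, Deg_single] at this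
    rw [this]; exact w.2
  have hs : (s.sum fun _ k => k) = m - 1 := by show Deg s = m - 1; omega
  have ht : (t.sum fun _ k => k) = m - 1 := by show Deg t = m - 1; omega
  have h1 : ((s + Finsupp.single i 1).sum fun _ k => k) = m := by rw [hsv]; exact v.2
  have h2 : ((t + Finsupp.single j 1).sum fun _ k => k) = m := by rw [htw]; exact w.2
  have h3 : ((s + Finsupp.single j 1).sum fun _ k => k) = m := by
    show Deg _ = m; rw [Deg_add, Deg_single]; omega
  have h4 : ((t + Finsupp.single i 1).sum fun _ k => k) = m := by
    show Deg _ = m; rw [Deg_add, Deg_single]; omega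
  have hmem : (X ⟨s + Finsupp.single i 1, h1⟩ * X ⟨t + Finsupp.single j 1, h2⟩
      - X ⟨s + Finsupp.single j 1, h3⟩ * X ⟨t + Finsupp.single i 1, h4⟩ :
        MvPolynomial (Vr n m) K) ∈ Sgen K n m :=
    ⟨s, t, i, j, hs, ht, h1, h2, h3, h4, rfl⟩
  have e1 : (⟨s + Finsupp.single i 1, h1⟩ : Vr n m) = v := Subtype.ext hsv
  have e2 : (⟨t + Finsupp.single j 1, h2⟩ : Vr n m) = w := Subtype.ext htw
  have e3 : (⟨s + Finsupp.single j 1, h3⟩ : Vr n m) = v' := Subtype.ext hv'.symm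
  have e4 : (⟨t + Finsupp.single i 1, h4⟩ : Vr n m) = w' := Subtype.ext hw'.symm
  rw [e1, e2, e3, e4] at hmem
  have := Ideal.subset_span hmem
  simpa [X_eq_monomial, monomial_mul] using this

lemma swap_move (hm : 1 ≤ m) (b : Vr n m →₀ ℕ) (u w u' w' : Vr n m) (i j : Fin n)
    (hui : u.1 i ≠ 0) (hwj : w.1 j ≠ 0)
    (hle : Finsupp.single u 1 + Finsupp.single w 1 ≤ b)
    (hu' : u'.1 = u.1 - Finsupp.single i 1 + Finsupp.single j 1)
    (hw' : w'.1 = w.1 - Finsupp.single j 1 + Finsupp.single i 1) :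
    monomial b (1:K) - monomial (b - Finsupp.single u 1 - Finsupp.single w 1
        + Finsupp.single u' 1 + Finsupp.single w' 1) 1 ∈ Ideal.span (Sgen K n m) := by
  obtain ⟨c, hb⟩ : ∃ c, b = c + (Finsupp.single u 1 + Finsupp.single w 1) :=
    ⟨b - (Finsupp.single u 1 + Finsupp.single w 1), (tsub_add_cancel_of_le hle).symm⟩
  subst hb
  have hb2 : c + (Finsupp.single u 1 + Finsupp.single w 1) - Finsupp.single u 1
        - Finsupp.single w 1 + Finsupp.single u' 1 + Finsupp.single w' 1
      = c + (Finsupp.single u' 1 + Finsupp.single w' 1) := by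
    rw [tsub_tsub, add_tsub_cancel_right, add_assoc]
  rw [hb2]
  exact rel_addright c (base_move hm u w u' w' i j hui hwj hu' hw')

lemma attract (hm : 1 ≤ m) :
    ∀ d : ℕ, ∀ (b : Vr n m →₀ ℕ) (v w : Vr n m), w ∈ b.support → v.1 ≤ ψ b →
      m - agree v w ≤ d →
      ∃ b', (monomial b (1:K) - monomial b' 1 ∈ Ideal.span (Sgen K n m))
        ∧ ψ b' = ψ b ∧ v ∈ b'.support := by
  intro d
  induction d with
  | zero =>
      intro b v w hw hv hd
      have hag : agree v w = m := le_antisymm (agree_le _ _) (by omega)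
      exact ⟨b, by rw [sub_self]; exact Ideal.zero_mem _, rfl, (agree_eq v w hag) ▸ hw⟩
  | succ d ih =>
      intro b v w hw hv hd
      by_cases hag : agree v w = m
      · exact ⟨b, by rw [sub_self]; exact Ideal.zero_mem _, rfl, (agree_eq v w hag) ▸ hw⟩
      have hlt : agree v w < m := lt_of_le_of_ne (agree_le _ _) hag
      obtain ⟨i, hi⟩ := agree_lt_left v w hlt
      obtain ⟨j, hj⟩ := agree_lt_right v w hlt
      have hij : i ≠ j := fun h => by subst h; omega
      have hwb : Finsupp.single w 1 ≤ b :=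
        Finsupp.single_le_iff.mpr (Nat.one_le_iff_ne_zero.mpr (Finsupp.mem_support_iff.mp hw))
      set c := b - Finsupp.single w 1 with hc_def
      have hcw : c + Finsupp.single w 1 = b := tsub_add_cancel_of_le hwb
      have hcψ : ψ c + w.1 = ψ b := by
        rw [← hcw, ψ_add, ψ_single, one_smul]
      have hci : ψ c i ≠ 0 := by
        have h1 : v.1 i ≤ ψ b i := hv i
        have h2 : ψ b i = ψ c i + w.1 i := by rw [← hcψ]; rfl
        omega
      obtain ⟨u, hu_supp, hui⟩ := exists_coord c i hci
      have huc : Finsupp.single u 1 ≤ c :=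
        Finsupp.single_le_iff.mpr (Nat.one_le_iff_ne_zero.mpr (Finsupp.mem_support_iff.mp hu_supp))
      have hwj : w.1 j ≠ 0 := by omega
      set u' : Vr n m := ⟨u.1 - Finsupp.single i 1 + Finsupp.single j 1, mk_deg hm u i j hui⟩
        with hu'_def
      set w'' : Vr n m := ⟨w.1 - Finsupp.single j 1 + Finsupp.single i 1, mk_deg hm w j i hwj⟩
        with hw''_def
      have hle : Finsupp.single u 1 + Finsupp.single w 1 ≤ b := by
        rw [← hcw]
        exact add_le_add_left huc _
      set b₂ := b - Finsupp.single u 1 - Finsupp.single w 1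
          + Finsupp.single u' 1 + Finsupp.single w'' 1 with hb₂_def
      have hrel : monomial b (1:K) - monomial b₂ 1 ∈ Ideal.span (Sgen K n m) :=
        swap_move hm b u w u' w'' i j hui hwj hle rfl rfl
      -- values of u' and w''
      have hu1 : 1 ≤ u.1 i := Nat.one_le_iff_ne_zero.mpr hui
      have hw1 : 1 ≤ w.1 j := Nat.one_le_iff_ne_zero.mpr hwj
      have hsum : u'.1 + w''.1 = u.1 + w.1 := by
        ext x
        simp only [hu'_def, hw''_def, Finsupp.add_apply, Finsupp.tsub_apply,
          Finsupp.single_apply]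
        rcases eq_or_ne i x with h1 | h1
        · subst h1
          simp [Ne.symm hij]
          omega
        · rcases eq_or_ne j x with h2 | h2
          · subst h2
            simp [h1]
            omega
          · simp [h1, h2]
      have hψb₂ : ψ b₂ = ψ b := by
        have hb₂' : b₂ = (b - (Finsupp.single u 1 + Finsupp.single w 1))
            + Finsupp.single u' 1 + Finsupp.single w'' 1 := by
          rw [hb₂_def, tsub_tsub]
        have hbb : (b - (Finsupp.single u 1 + Finsupp.single w 1))
            + Finsupp.single u 1 + Finsupp.single w 1 = b := by
          rw [add_assoc]
          exact tsub_add_cancel_of_le hle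
        have e1 : ψ b₂ = ψ (b - (Finsupp.single u 1 + Finsupp.single w 1)) + u'.1 + w''.1 := by
          rw [hb₂', ψ_add, ψ_add, ψ_single, ψ_single, one_smul, one_smul]
        have e2 : ψ b = ψ (b - (Finsupp.single u 1 + Finsupp.single w 1)) + u.1 + w.1 := by
          conv_lhs => rw [← hbb]
          rw [ψ_add, ψ_add, ψ_single, ψ_single, one_smul, one_smul]
        rw [e1, e2, add_assoc _ u'.1 w''.1, add_assoc _ u.1 w.1, hsum]
      have hw''supp : w'' ∈ b₂.support := by
        rw [Finsupp.mem_support_iff, hb₂_def]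
        have heq : ((b - Finsupp.single u 1 - Finsupp.single w 1 + Finsupp.single u' 1
            + Finsupp.single w'' 1 : Vr n m →₀ ℕ)) w''
            = ((b - Finsupp.single u 1 - Finsupp.single w 1
            + Finsupp.single u' 1 : Vr n m →₀ ℕ)) w'' + 1 := by
          rw [Finsupp.add_apply, Finsupp.single_apply, if_pos rfl]
        omega
      -- agreement increases
      have hw''x : ∀ x, w''.1 x = w.1 x + (if i = x then 1 else 0) - (if j = x then 1 else 0) := by
        intro x
        simp only [hw''_def, Finsupp.add_apply, Finsupp.tsub_apply, Finsupp.single_apply]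
        rcases eq_or_ne i x with h1 | h1
        · subst h1
          simp [Ne.symm hij]
        · rcases eq_or_ne j x with h2 | h2
          · subst h2
            simp [h1]
          · simp [h1, h2]
      have hagree : agree v w < agree v w'' := by
        apply Finset.sum_lt_sum
        · intro x _
          have hx := hw''x x
          rcases eq_or_ne i x with h1 | h1
          · subst h1
            simp only [Ne.symm hij, if_true, if_false, eq_self_iff_true, ite_true, ite_false, if_neg, Nat.add_zero, Nat.sub_zero] at hx
            simp only [min_def]
            split_ifs <;> omega
          · rcases eq_or_ne j x with h2 | h2
            · subst h2
              simp only [h1, if_true, if_false, eq_self_iff_true, ite_true, ite_false, Nat.add_zero, Nat.sub_zero] at hx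
              simp only [min_def]
              split_ifs <;> omega
            · simp only [h1, h2, if_false, ite_false, Nat.add_zero, Nat.sub_zero] at hx
              simp only [min_def]
              split_ifs <;> omega
        · refine ⟨i, Finset.mem_univ i, ?_⟩
          have hx := hw''x i
          simp only [Ne.symm hij, if_true, if_false, eq_self_iff_true, ite_true, ite_false, Nat.add_zero, Nat.sub_zero] at hx
          simp only [min_def]
          split_ifs <;> omega
      have hvb₂ : v.1 ≤ ψ b₂ := hψb₂ ▸ hv
      have hd₂ : m - agree v w'' ≤ d := by
        have := agree_le v w''
        omega
      obtain ⟨b', hrel', hψ', hv'⟩ := ih b₂ v w'' hw''supp hvb₂ hd₂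
      refine ⟨b', ?_, hψ'.trans hψb₂, hv'⟩
      have : monomial b (1:K) - monomial b' 1
          = (monomial b 1 - monomial b₂ 1) + (monomial b₂ 1 - monomial b' 1) := by ring
      rw [this]
      exact Ideal.add_mem _ hrel hrel'

lemma ψ_zero : ψ (0 : Vr n m →₀ ℕ) = 0 := Finsupp.sum_zero_index

lemma degA_eq_zero (a : Vr n m →₀ ℕ) (h : degA a = 0) : a = 0 := by
  ext v
  simp only [Finsupp.coe_zero, Pi.zero_apply]
  by_contra hv0
  have hv : v ∈ a.support := Finsupp.mem_support_iff.mpr hv0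
  exact hv0 ((Finset.sum_eq_zero_iff.mp h) v hv)

lemma degA_zero_of_ψ (hm : 1 ≤ m) (b : Vr n m →₀ ℕ) (h : ψ b = 0) : b = 0 := by
  apply degA_eq_zero
  have h2 := Deg_ψ b
  rw [h] at h2
  have : Deg (0 : Fin n →₀ ℕ) = 0 := by simp [Deg]
  rw [this] at h2
  have := Nat.mul_eq_zero.mp h2.symm
  omega

lemma main_binomial (hm : 1 ≤ m) :
    ∀ d : ℕ, ∀ a b : Vr n m →₀ ℕ, degA a ≤ d → ψ a = ψ b →
      monomial a (1:K) - monomial b 1 ∈ Ideal.span (Sgen K n m) := by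
  intro d
  induction d with
  | zero =>
      intro a b hd hψab
      have ha : a = 0 := degA_eq_zero a (Nat.le_zero.mp hd)
      have hb : b = 0 := degA_zero_of_ψ hm b (by rw [← hψab, ha, ψ_zero])
      rw [ha, hb, sub_self]
      exact Ideal.zero_mem _
  | succ d ih =>
      intro a b hd hψab
      by_cases ha0 : a = 0
      · have hb : b = 0 := degA_zero_of_ψ hm b (by rw [← hψab, ha0, ψ_zero])
        rw [ha0, hb, sub_self]
        exact Ideal.zero_mem _
      obtain ⟨v, hv⟩ := Finsupp.support_nonempty_iff.mpr ha0
      have hsva : Finsupp.single v 1 ≤ a :=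
        Finsupp.single_le_iff.mpr (Nat.one_le_iff_ne_zero.mpr (Finsupp.mem_support_iff.mp hv))
      have haa : a - Finsupp.single v 1 + Finsupp.single v 1 = a := tsub_add_cancel_of_le hsva
      have hψa_split : ψ (a - Finsupp.single v 1) + v.1 = ψ a := by
        conv_rhs => rw [← haa]
        rw [ψ_add, ψ_single, one_smul]
      have hvψa : v.1 ≤ ψ a := by
        rw [← hψa_split]; exact le_add_self
      have hb0 : b ≠ 0 := by
        intro h
        rw [h, ψ_zero] at hψab
        exact ha0 (degA_zero_of_ψ hm a hψab)
      obtain ⟨w, hw⟩ := Finsupp.support_nonempty_iff.mpr hb0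
      obtain ⟨b', hrelb, hψb', hvb'⟩ :=
        attract (K := K) hm m b v w hw (hψab ▸ hvψa) (Nat.sub_le _ _)
      have hsvb : Finsupp.single v 1 ≤ b' :=
        Finsupp.single_le_iff.mpr (Nat.one_le_iff_ne_zero.mpr (Finsupp.mem_support_iff.mp hvb'))
      have hbb : b' - Finsupp.single v 1 + Finsupp.single v 1 = b' := tsub_add_cancel_of_le hsvb
      have hψb_split : ψ (b' - Finsupp.single v 1) + v.1 = ψ b' := by
        conv_rhs => rw [← hbb]
        rw [ψ_add, ψ_single, one_smul]
      have hψ₁ : ψ (a - Finsupp.single v 1) = ψ (b' - Finsupp.single v 1) := by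
        have : ψ (a - Finsupp.single v 1) + v.1 = ψ (b' - Finsupp.single v 1) + v.1 := by
          rw [hψa_split, hψb_split, hψb', hψab]
        exact add_right_cancel this
      have hdeg : degA (a - Finsupp.single v 1) ≤ d := by
        have := congrArg degA haa
        rw [degA_add, degA_single] at this
        omega
      have hrel₁ := ih (a - Finsupp.single v 1) (b' - Finsupp.single v 1) hdeg hψ₁
      have hab' : monomial a (1:K) - monomial b' 1 ∈ Ideal.span (Sgen K n m) := by
        have h2 := rel_addright (Finsupp.single v 1) hrel₁
        rw [add_comm (Finsupp.single v 1), add_comm (Finsupp.single v 1)] at h2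
        rwa [haa, hbb] at h2
      have : monomial a (1:K) - monomial b 1
          = (monomial a 1 - monomial b' 1) - (monomial b 1 - monomial b' 1) := by ring
      rw [this]
      exact Ideal.sub_mem _ hab' hrelb

lemma aeval_monomial' (a : Vr n m →₀ ℕ) (c : K) :
    (aeval fun s : Vr n m => monomial s.1 (1 : K)) (monomial a c) = monomial (ψ a) c := by
  rw [aeval_monomial, ψ, monomial_finsupp_sum_index]
  simp [monomial_pow, algebraMap_eq]

lemma coeff_aeval (p : MvPolynomial (Vr n m) K) (d : Fin n →₀ ℕ) :
    coeff d ((aeval fun s : Vr n m => monomial s.1 (1 : K)) p) =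
      ∑ a ∈ p.support.filter (fun a => ψ a = d), coeff a p := by
  classical
  conv_lhs => rw [p.as_sum, map_sum]
  rw [MvPolynomial.coeff_sum]
  simp only [aeval_monomial', coeff_monomial]
  rw [Finset.sum_filter]

lemma mem_of_ker (I : Ideal (MvPolynomial (Vr n m) K))
    (hbin : ∀ a b : Vr n m →₀ ℕ, ψ a = ψ b → monomial a (1:K) - monomial b 1 ∈ I) :
    ∀ p : MvPolynomial (Vr n m) K,
      (aeval fun s : Vr n m => monomial s.1 (1 : K)) p = 0 → p ∈ I := by
  classical
  suffices H : ∀ N, ∀ p : MvPolynomial (Vr n m) K, p.support.card ≤ N →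
      (aeval fun s : Vr n m => monomial s.1 (1 : K)) p = 0 → p ∈ I by
    intro p hp; exact H p.support.card p le_rfl hp
  intro N
  induction N with
  | zero =>
      intro p hc _
      have h0 : p.support = ∅ := Finset.card_eq_zero.mp (Nat.le_zero.mp hc)
      rw [MvPolynomial.support_eq_empty.mp h0]
      exact I.zero_mem
  | succ N ih =>
      intro p hc hker
      by_cases hp0 : p = 0
      · simp [hp0]
      obtain ⟨a, ha⟩ := (MvPolynomial.support_nonempty.mpr hp0)
      have hco : ∑ b ∈ p.support.filter (fun b => ψ b = ψ a), coeff b p = 0 := by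
        rw [← coeff_aeval, hker, coeff_zero]
      have haf : a ∈ p.support.filter (fun b => ψ b = ψ a) := by
        simp [Finset.mem_filter, ha]
      have hbne : ∃ b ∈ p.support.filter (fun b => ψ b = ψ a), b ≠ a := by
        by_contra h
        push_neg at h
        have : p.support.filter (fun b => ψ b = ψ a) = {a} :=
          Finset.eq_singleton_iff_unique_mem.mpr ⟨haf, h⟩
        rw [this, Finset.sum_singleton] at hco
        exact (MvPolynomial.mem_support_iff.mp ha) hco
      obtain ⟨b, hbf, hba⟩ := hbne
      have hψ : ψ b = ψ a := (Finset.mem_filter.mp hbf).2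
      have hbsup : b ∈ p.support := (Finset.mem_filter.mp hbf).1
      set c := coeff a p with hcdef
      set g : MvPolynomial (Vr n m) K := monomial a 1 - monomial b 1 with hgdef
      set q := p - C c * g with hqdef
      have hgker : (aeval fun s : Vr n m => monomial s.1 (1 : K)) g = 0 := by
        rw [hgdef, map_sub, aeval_monomial', aeval_monomial', hψ, sub_self]
      have hqker : (aeval fun s : Vr n m => monomial s.1 (1 : K)) q = 0 := by
        rw [hqdef, map_sub, map_mul, hgker, mul_zero, sub_zero, hker]
      have hsup : q.support ⊆ p.support.erase a := by
        intro d hd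
        have hdq : coeff d q ≠ 0 := MvPolynomial.mem_support_iff.mp hd
        have hda : d ≠ a := by
          intro h; subst h
          apply hdq
          simp [hqdef, hgdef, coeff_sub, coeff_C_mul, coeff_monomial, hba, hcdef]
        rw [Finset.mem_erase]
        refine ⟨hda, ?_⟩
        by_cases hdb : d = b
        · subst hdb; exact hbsup
        · rw [MvPolynomial.mem_support_iff]
          intro h
          apply hdq
          simp [hqdef, hgdef, coeff_sub, coeff_C_mul, coeff_monomial,
            (Ne.symm hda), (Ne.symm hdb), h]
      have hcard : q.support.card ≤ N := by
        have := Finset.card_le_card hsup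
        have h2 : (p.support.erase a).card < p.support.card := Finset.card_erase_lt_of_mem ha
        omega
      have hq : q ∈ I := ih q hcard hqker
      have : p = q + C c * g := by rw [hqdef]; ring
      rw [this]
      exact I.add_mem hq (I.mul_mem_left _ (hbin a b (hψ ▸ rfl)))


end VerAux

open VerAux in
/-- **Quadratic binomial relations of the Veronese.**
Let `𝓜` be the set of monomials of degree `m` in `K[y₁,…,y_n]` (identified with their
exponent vectors) and `φ : K[{x_M}_{M ∈ 𝓜}] → K[y₁,…,y_n]` the `K`-algebra map sending
`x_M` to `M`.  Then `ker φ` is generated by the binomials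
`x_{y_i M} x_{y_j N} - x_{y_j M} x_{y_i N}` with `M, N` monomials of degree `m - 1`
and `1 ≤ i, j ≤ n`; in particular it is generated in degree `2` in the variables `x_M`. -/
theorem veronese_syzygy_ideal_binomials
    {K : Type} [Field K] (n m : ℕ) (hn : 1 ≤ n) (hm : 1 ≤ m)
    (φ : MvPolynomial {s : Fin n →₀ ℕ // (s.sum fun _ k => k) = m} K
      →ₐ[K] MvPolynomial (Fin n) K)
    (hφ : φ = MvPolynomial.aeval fun s : {s : Fin n →₀ ℕ // (s.sum fun _ k => k) = m} =>
      MvPolynomial.monomial s.1 (1 : K)) :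
    RingHom.ker φ =
      Ideal.span {q : MvPolynomial {s : Fin n →₀ ℕ // (s.sum fun _ k => k) = m} K |
        ∃ (s t : Fin n →₀ ℕ) (i j : Fin n)
          (_ : (s.sum fun _ k => k) = m - 1) (_ : (t.sum fun _ k => k) = m - 1)
          (h1 : ((s + Finsupp.single i 1).sum fun _ k => k) = m)
          (h2 : ((t + Finsupp.single j 1).sum fun _ k => k) = m)
          (h3 : ((s + Finsupp.single j 1).sum fun _ k => k) = m)
          (h4 : ((t + Finsupp.single i 1).sum fun _ k => k) = m),
          q = MvPolynomial.X ⟨s + Finsupp.single i 1, h1⟩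
                * MvPolynomial.X ⟨t + Finsupp.single j 1, h2⟩
              - MvPolynomial.X ⟨s + Finsupp.single j 1, h3⟩
                * MvPolynomial.X ⟨t + Finsupp.single i 1, h4⟩} := by
  subst hφ
  show _ = Ideal.span (Sgen K n m)
  apply le_antisymm
  · intro p hp
    rw [RingHom.mem_ker] at hp
    exact mem_of_ker _ (fun a b h => main_binomial hm (degA a) a b le_rfl h) p hp
  · rw [Ideal.span_le]
    rintro q ⟨s, t, i, j, hs, ht, h1, h2, h3, h4, rfl⟩
    rw [SetLike.mem_coe, RingHom.mem_ker]
    simp only [map_sub, map_mul, MvPolynomial.aeval_X]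
    rw [MvPolynomial.monomial_mul, MvPolynomial.monomial_mul]
    have he : (s + Finsupp.single i 1) + (t + Finsupp.single j 1)
        = (s + Finsupp.single j 1) + (t + Finsupp.single i 1) := by abel
    rw [he, sub_self]
end

section
/- Let K be a field of characteristic 0, let e_1,...,e_n ∈ K[y_1,...,y_n] be the elementary symmetric polynomials, and let Δ = ∏_{1≤i<j≤n}(y_i − y_j). Then Δ² is a symmetric polynomial and hence there is a (unique) polynomial P ∈ K[x_1,...,x_n] with Δ² = P(e_1,...,e_n); the syzygy ideal J ⊆ K[x_1,...,x_{n+1}] of the generators (e_1,...,e_n,Δ) of K[y_1,...,y_n]^{A_n} (the kernel of x_i ↦ e_i for i ≤ n, x_{n+1} ↦ Δ) is generated by the single element x_{n+1}² − P(x_1,...,x_n), which is homogeneous of degree n(n−1) for the grading deg(x_i) = i (i ≤ n), deg(x_{n+1}) = n(n−1)/2. -/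
open MvPolynomial Finset

lemma aux_pairProd {n : ℕ} {R : Type*} [CommRing R] (f : Fin n × Fin n → R) :
    ∏ p ∈ Finset.univ.filter (fun p : Fin n × Fin n => p.1 < p.2), f p
      = ∏ i : Fin n, ∏ j ∈ Finset.Ioi i, f (i, j) := by
  rw [Finset.prod_sigma']
  exact Finset.prod_nbij' (fun p => ⟨p.1, p.2⟩) (fun x => (x.1, x.2))
    (by simp) (by simp) (by simp) (by simp) (by simp)


lemma aux_wh_rename {σ τ : Type*} {R : Type*} [CommRing R] (f : σ → τ) (w : τ → ℕ)
    {p : MvPolynomial σ R} {m : ℕ} (h : p.IsWeightedHomogeneous (w ∘ f) m) :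
    (MvPolynomial.rename f p).IsWeightedHomogeneous w m := by
  intro d hd
  obtain ⟨u, hu, hu'⟩ := MvPolynomial.coeff_rename_ne_zero f p d hd
  have := h hu'
  rw [← hu]
  rw [Finsupp.weight_apply] at this ⊢
  rw [Finsupp.sum_mapDomain_index (by simp) (by intros; rw [add_smul])]
  exact this

variable {K : Type} [Field K]

-- the Vandermonde determinant V
noncomputable def auxV (n : ℕ) (K : Type) [Field K] : MvPolynomial (Fin n) K :=
  Matrix.det (Matrix.vandermonde fun i => (MvPolynomial.X i : MvPolynomial (Fin n) K))

lemma auxV_eq (n : ℕ) : auxV n K = ∏ i : Fin n, ∏ j ∈ Finset.Ioi i, (X j - X i) :=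
  Matrix.det_vandermonde _

lemma aux_rename_V (n : ℕ) (π : Equiv.Perm (Fin n)) :
    rename π (auxV n K) = ((Equiv.Perm.sign π : ℤ) : MvPolynomial (Fin n) K) * auxV n K := by
  set M : Matrix (Fin n) (Fin n) (MvPolynomial (Fin n) K) :=
    Matrix.vandermonde fun i => (X i : MvPolynomial (Fin n) K) with hM
  set f : MvPolynomial (Fin n) K →+* MvPolynomial (Fin n) K :=
    (rename (π : Fin n → Fin n)).toRingHom with hf
  have h1 : rename (π : Fin n → Fin n) (Matrix.det M) = Matrix.det (f.mapMatrix M) :=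
    RingHom.map_det f M
  have h2 : f.mapMatrix M = M.submatrix π id := by
    ext i j
    simp [hM, hf, Matrix.vandermonde, map_pow]
  rw [auxV, ← hM, h1, h2, Matrix.det_permute]

lemma auxV_ne_zero (n : ℕ) : auxV n K ≠ 0 := by
  rw [auxV, Ne, Matrix.det_vandermonde_eq_zero_iff]
  rintro ⟨i, j, hij, hne⟩
  exact hne (MvPolynomial.X_injective hij)

noncomputable def auxD (n : ℕ) (K : Type) [Field K] : MvPolynomial (Fin n) K :=
  ∏ p ∈ Finset.univ.filter (fun p : Fin n × Fin n => p.1 < p.2),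
      (MvPolynomial.X p.1 - MvPolynomial.X p.2)

def auxN (n : ℕ) : ℕ := ∑ i : Fin n, (Finset.Ioi i).card

lemma auxN_mul_two (n : ℕ) : auxN n * 2 = n * (n - 1) := by
  have h1 : auxN n = ∑ k ∈ Finset.range n, (n - 1 - k) := by
    rw [auxN, ← Fin.sum_univ_eq_sum_range (fun k => n - 1 - k)]
    exact Finset.sum_congr rfl fun i _ => Fin.card_Ioi i
  rw [h1, Finset.sum_range_reflect (fun k => k) n]
  exact Finset.sum_range_id_mul_two n

lemma auxD_eq (n : ℕ) : auxD n K = (-1) ^ auxN n * auxV n K := by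
  rw [auxD, aux_pairProd, auxV_eq, auxN]
  rw [← Finset.prod_pow_eq_pow_sum, ← Finset.prod_mul_distrib]
  refine Finset.prod_congr rfl fun i _ => ?_
  rw [← Finset.prod_const, ← Finset.prod_mul_distrib]
  exact Finset.prod_congr rfl fun j _ => by ring

lemma auxD_ne_zero (n : ℕ) : auxD n K ≠ 0 := by
  rw [auxD_eq]
  exact mul_ne_zero (pow_ne_zero _ (neg_ne_zero.mpr one_ne_zero)) (auxV_ne_zero n)

lemma aux_rename_D (n : ℕ) (π : Equiv.Perm (Fin n)) :
    rename π (auxD n K) = ((Equiv.Perm.sign π : ℤ) : MvPolynomial (Fin n) K) * auxD n K := by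
  rw [auxD_eq, map_mul, aux_rename_V]
  have : (rename (π : Fin n → Fin n)) ((-1 : MvPolynomial (Fin n) K) ^ auxN n)
      = (-1) ^ auxN n := by simp
  rw [this]; ring

lemma aux_rename_D_sq (n : ℕ) (π : Equiv.Perm (Fin n)) :
    rename π (auxD n K ^ 2) = auxD n K ^ 2 := by
  rw [map_pow, aux_rename_D, mul_pow]
  have : (((Equiv.Perm.sign π : ℤ) : MvPolynomial (Fin n) K)) ^ 2 = 1 := by
    have h : ((Equiv.Perm.sign π : ℤ)) ^ 2 = 1 := by
      rw [← Units.val_pow_eq_pow_val, Int.units_sq]; rfl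
    calc (((Equiv.Perm.sign π : ℤ) : MvPolynomial (Fin n) K)) ^ 2
        = (((Equiv.Perm.sign π : ℤ) ^ 2 : ℤ) : MvPolynomial (Fin n) K) := by push_cast; ring
      _ = 1 := by rw [h]; simp
  rw [this, one_mul]

lemma auxD_isHomogeneous (n : ℕ) : (auxD n K).IsHomogeneous (auxN n) := by
  rw [auxD, aux_pairProd, auxN]
  apply MvPolynomial.IsHomogeneous.prod _ _ (fun i => (Finset.Ioi i).card)
  intro i _
  have := MvPolynomial.IsHomogeneous.prod (Finset.Ioi i)
    (fun j => (X i - X j : MvPolynomial (Fin n) K)) (fun _ => 1)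
    (fun j _ => (isHomogeneous_X K i).sub (isHomogeneous_X K j))
  simpa using this

lemma aux_rename_D_swap (n : ℕ) (hn : 2 ≤ n) :
    rename (Equiv.swap (⟨0, by omega⟩ : Fin n) ⟨1, by omega⟩) (auxD n K) = - auxD n K := by
  rw [aux_rename_D]
  rw [Equiv.Perm.sign_swap (by simp [Fin.ext_iff])]
  simp

lemma aux_esymm_isHomogeneous (n k : ℕ) :
    (MvPolynomial.esymm (Fin n) K k).IsHomogeneous k := by
  rw [MvPolynomial.esymm]
  apply MvPolynomial.IsHomogeneous.sum
  intro t ht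
  have hc : t.card = k := (Finset.mem_powersetCard.mp ht).2
  have := MvPolynomial.IsHomogeneous.prod t (fun i => (X i : MvPolynomial (Fin n) K))
    (fun _ => 1) (fun i _ => isHomogeneous_X K i)
  simpa [hc] using this

-- aeval of a weighted-homogeneous polynomial at the elementary symmetrics is homogeneous
lemma aux_aeval_wh (n : ℕ) (e : Fin n → MvPolynomial (Fin n) K)
    (he : ∀ i : Fin n, e i = MvPolynomial.esymm (Fin n) K ((i : ℕ) + 1))
    (p : MvPolynomial (Fin n) K) (d : ℕ)
    (h : p.IsWeightedHomogeneous (fun i : Fin n => (i : ℕ) + 1) d) :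
    (MvPolynomial.aeval e p).IsHomogeneous d := by
  conv_lhs => rw [← p.support_sum_monomial_coeff]
  rw [map_sum]
  apply MvPolynomial.IsHomogeneous.sum
  intro u hu
  rw [MvPolynomial.aeval_monomial]
  have hwu : (Finsupp.weight (fun i : Fin n => (i : ℕ) + 1)) u = d :=
    h (MvPolynomial.mem_support_iff.mp hu)
  have h2 : (u.prod fun i k => e i ^ k).IsHomogeneous d := by
    rw [Finsupp.prod]
    have := MvPolynomial.IsHomogeneous.prod u.support (fun i => e i ^ u i)
      (fun i => ((i : ℕ) + 1) * u i) (fun i _ => by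
        show (e i ^ u i).IsHomogeneous _
        rw [he i]; exact (aux_esymm_isHomogeneous n ((i : ℕ) + 1)).pow (u i))
    convert this using 1
    rw [← hwu, Finsupp.weight_apply, Finsupp.sum]
    exact Finset.sum_congr rfl fun i _ => by simp [mul_comm]
  simpa using h2.C_mul _

lemma aux_aeval_inj (n : ℕ) (e : Fin n → MvPolynomial (Fin n) K)
    (he : ∀ i : Fin n, e i = MvPolynomial.esymm (Fin n) K ((i : ℕ) + 1)) :
    Function.Injective (MvPolynomial.aeval (R := K) e) := by
  have he' : e = fun i : Fin n => MvPolynomial.esymm (Fin n) K ((i : ℕ) + 1) := funext he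
  intro p q h
  apply MvPolynomial.esymmAlgHom_fin_injective (le_refl n) (R := K)
  apply Subtype.ext
  rw [MvPolynomial.esymmAlgHom_apply, MvPolynomial.esymmAlgHom_apply, ← he']
  exact h

lemma aux_exists_P (n : ℕ) (e : Fin n → MvPolynomial (Fin n) K)
    (he : ∀ i : Fin n, e i = MvPolynomial.esymm (Fin n) K ((i : ℕ) + 1))
    (q : MvPolynomial (Fin n) K) (hq : q.IsSymmetric) :
    ∃ P, MvPolynomial.aeval (R := K) e P = q := by
  have he' : e = fun i : Fin n => MvPolynomial.esymm (Fin n) K ((i : ℕ) + 1) := funext he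
  obtain ⟨P, hP⟩ := (MvPolynomial.esymmAlgHom_fin_bijective K n).2 ⟨q, hq⟩
  refine ⟨P, ?_⟩
  have := congrArg Subtype.val hP
  rw [MvPolynomial.esymmAlgHom_apply] at this
  rw [he']
  exact this

-- P is weighted homogeneous
lemma aux_P_wh (n : ℕ) (e : Fin n → MvPolynomial (Fin n) K)
    (he : ∀ i : Fin n, e i = MvPolynomial.esymm (Fin n) K ((i : ℕ) + 1))
    (P : MvPolynomial (Fin n) K) (N : ℕ)
    (hPe : (MvPolynomial.aeval (R := K) e P).IsHomogeneous N) :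
    P.IsWeightedHomogeneous (fun i : Fin n => (i : ℕ) + 1) N := by
  set w0 : Fin n → ℕ := fun i => (i : ℕ) + 1 with hw0
  have hinj := aux_aeval_inj n e he
  have hkey : ∀ d, d ≠ N → weightedHomogeneousComponent w0 d P = 0 := by
    intro d hd
    have h1 : ∀ m, ((MvPolynomial.aeval e) (weightedHomogeneousComponent w0 m P)).IsHomogeneous m :=
      fun m => aux_aeval_wh n e he _ m (weightedHomogeneousComponent_isWeightedHomogeneous m P)
    have hfin : (Function.support fun m => weightedHomogeneousComponent w0 m P).Finite :=
      weightedHomogeneousComponent_finsupp P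
    have hfin2 : (Function.support
        fun m => (MvPolynomial.aeval e) (weightedHomogeneousComponent w0 m P)).Finite := by
      apply hfin.subset
      intro m hm
      simp only [Function.mem_support] at hm ⊢
      intro h0
      rw [h0, map_zero] at hm
      exact hm rfl
    have hsum : (finsum fun m => (MvPolynomial.aeval e) (weightedHomogeneousComponent w0 m P))
        = MvPolynomial.aeval e P := by
      have := AddMonoidHom.map_finsum
        (MvPolynomial.aeval (R := K) e).toLinearMap.toAddMonoidHom hfin
      simp only [LinearMap.toAddMonoidHom_coe, AlgHom.toLinearMap_apply] at this
      rw [← this, sum_weightedHomogeneousComponent]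
    have h2 : (MvPolynomial.aeval e) (weightedHomogeneousComponent w0 d P)
        = weightedHomogeneousComponent (1 : Fin n → ℕ) d (MvPolynomial.aeval e P) := by
      have ha := AddMonoidHom.map_finsum
        (weightedHomogeneousComponent (1 : Fin n → ℕ) d).toAddMonoidHom hfin2
      simp only [LinearMap.toAddMonoidHom_coe] at ha
      calc (MvPolynomial.aeval e) (weightedHomogeneousComponent w0 d P)
          = ∑ᶠ m, weightedHomogeneousComponent (1 : Fin n → ℕ) d
              ((MvPolynomial.aeval e) (weightedHomogeneousComponent w0 m P)) := by
            rw [finsum_eq_single _ d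
              (fun m hm => (h1 m).weightedHomogeneousComponent_ne d (Ne.symm hm))]
            exact ((h1 d).weightedHomogeneousComponent_same).symm
        _ = weightedHomogeneousComponent (1 : Fin n → ℕ) d
              (∑ᶠ m, (MvPolynomial.aeval e) (weightedHomogeneousComponent w0 m P)) := ha.symm
        _ = _ := by rw [hsum]
    rw [(hPe.weightedHomogeneousComponent_ne d hd)] at h2
    apply hinj
    rw [h2, map_zero]
  have hPrep : P = weightedHomogeneousComponent w0 N P := by
    conv_lhs => rw [← sum_weightedHomogeneousComponent (w := w0) P]
    exact finsum_eq_single _ N hkey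
  rw [hPrep]
  exact weightedHomogeneousComponent_isWeightedHomogeneous N P

noncomputable def auxφ (n : ℕ) (K : Type) [Field K] :
    MvPolynomial (Fin (n + 1)) K ≃ₐ[K] Polynomial (MvPolynomial (Fin n) K) :=
  (MvPolynomial.renameEquiv K (finRotate (n + 1))).trans (MvPolynomial.finSuccEquiv K n)

lemma auxφ_X_last (n : ℕ) : auxφ n K (X (Fin.last n)) = Polynomial.X := by
  simp only [auxφ, AlgEquiv.trans_apply, MvPolynomial.renameEquiv_apply, MvPolynomial.rename_X,
    finRotate_last]
  exact MvPolynomial.finSuccEquiv_X_zero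

lemma auxφ_X_castSucc {n : ℕ} (i : Fin n) :
    auxφ n K (X i.castSucc) = Polynomial.C (X i) := by
  have h : finRotate (n + 1) i.castSucc = i.succ := by
    rw [finRotate_succ_apply]
    ext
    rw [Fin.val_add_one_of_lt (Fin.castSucc_lt_last i)]
    simp
  simp only [auxφ, AlgEquiv.trans_apply, MvPolynomial.renameEquiv_apply, MvPolynomial.rename_X, h]
  exact MvPolynomial.finSuccEquiv_X_succ

lemma auxφ_rename {n : ℕ} (q : MvPolynomial (Fin n) K) :
    auxφ n K (rename Fin.castSucc q) = Polynomial.C q := by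
  induction q using MvPolynomial.induction_on with
  | C a =>
    rw [MvPolynomial.rename_C, ← MvPolynomial.algebraMap_eq, AlgEquiv.commutes]
    simp [Polynomial.algebraMap_apply, MvPolynomial.algebraMap_eq]
  | add p q hp hq => rw [map_add, map_add, hp, hq, map_add]
  | mul_X p i hp => rw [map_mul, map_mul, hp, MvPolynomial.rename_X, auxφ_X_castSucc, Polynomial.C_mul]

lemma aux_wh_neg {σ : Type*} {R : Type*} [CommRing R] {w : σ → ℕ} {p : MvPolynomial σ R} {m : ℕ}
    (h : p.IsWeightedHomogeneous w m) : (-p).IsWeightedHomogeneous w m := by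
  intro d hd
  exact h (by simpa using hd)



/-- **The syzygy ideal of `K[y₁,…,y_n]^{A_n}` is generated by one relation.**
Over a field `K` of characteristic `0`, `Δ² = (∏_{i<j}(y_i-y_j))²` is a symmetric
polynomial, hence `Δ² = P(e₁,…,e_n)` for a unique polynomial `P`, and the syzygy ideal
`J ⊆ K[x₁,…,x_{n+1}]` of the generators `(e₁,…,e_n,Δ)` of the alternating invariant
ring (the kernel of `x_i ↦ e_i`, `x_{n+1} ↦ Δ`) is generated by the single element
`x_{n+1}² - P(x₁,…,x_n)`, which is homogeneous of degree `n(n-1)` for the grading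
`deg x_i = i` (`i ≤ n`), `deg x_{n+1} = n(n-1)/2`. -/
theorem alternating_syzygy_ideal_principal
    {K : Type} [Field K] [CharZero K] (n : ℕ) (hn : 2 ≤ n)
    (e : Fin n → MvPolynomial (Fin n) K)
    (he : ∀ i : Fin n, e i = MvPolynomial.esymm (Fin n) K ((i : ℕ) + 1))
    (Δ : MvPolynomial (Fin n) K)
    (hΔ : Δ = ∏ p ∈ Finset.univ.filter (fun p : Fin n × Fin n => p.1 < p.2),
      (MvPolynomial.X p.1 - MvPolynomial.X p.2))
    (g : Fin (n + 1) → MvPolynomial (Fin n) K)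
    (hg : ∀ i : Fin n, g i.castSucc = e i) (hg' : g (Fin.last n) = Δ)
    (J : Ideal (MvPolynomial (Fin (n + 1)) K))
    (hJ : J = RingHom.ker (MvPolynomial.aeval (R := K) g))
    (w : Fin (n + 1) → ℕ)
    (hw : ∀ i : Fin n, w i.castSucc = (i : ℕ) + 1) (hw' : w (Fin.last n) = n * (n - 1) / 2) :
    (∀ π : Equiv.Perm (Fin n), MvPolynomial.rename π (Δ ^ 2) = Δ ^ 2)
    ∧ (∃! P : MvPolynomial (Fin n) K, MvPolynomial.aeval e P = Δ ^ 2)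
    ∧ ∀ P : MvPolynomial (Fin n) K, MvPolynomial.aeval e P = Δ ^ 2 →
        J = Ideal.span {MvPolynomial.X (Fin.last n) ^ 2
              - MvPolynomial.rename Fin.castSucc P}
        ∧ MvPolynomial.IsWeightedHomogeneous w
            (MvPolynomial.X (Fin.last n) ^ 2 - MvPolynomial.rename Fin.castSucc P)
            (n * (n - 1)) := by
  have hD : Δ = auxD n K := hΔ
  have hN2 : auxN n * 2 = n * (n - 1) := auxN_mul_two n
  have hsym : ∀ π : Equiv.Perm (Fin n), MvPolynomial.rename π (Δ ^ 2) = Δ ^ 2 := by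
    intro π; rw [hD]; exact aux_rename_D_sq n π
  have hNhom : (Δ ^ 2).IsHomogeneous (n * (n - 1)) := by
    rw [hD, ← hN2]
    exact (auxD_isHomogeneous n).pow 2
  have hinj := aux_aeval_inj n e he
  have hge : g ∘ Fin.castSucc = e := funext hg
  obtain ⟨P0, hP0⟩ := aux_exists_P n e he (Δ ^ 2) hsym
  refine ⟨hsym, ⟨P0, hP0, fun Q hQ => hinj (by rw [hQ, hP0])⟩, ?_⟩
  intro P hPe
  set G : MvPolynomial (Fin (n + 1)) K :=
    MvPolynomial.X (Fin.last n) ^ 2 - MvPolynomial.rename Fin.castSucc P with hG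
  have hPwh : P.IsWeightedHomogeneous (fun i : Fin n => (i : ℕ) + 1) (n * (n - 1)) :=
    aux_P_wh n e he P _ (by rw [hPe]; exact hNhom)
  have hGker : MvPolynomial.aeval (R := K) g G = 0 := by
    rw [hG, map_sub, map_pow, MvPolynomial.aeval_X, hg', MvPolynomial.aeval_rename, hge, hPe,
      sub_self]
  constructor
  · rw [hJ]
    apply le_antisymm
    · intro Q hQ
      rw [RingHom.mem_ker] at hQ
      set φe := auxφ n K with hφe
      set mP : Polynomial (MvPolynomial (Fin n) K) := Polynomial.X ^ 2 - Polynomial.C P with hmP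
      have hm : mP.Monic := Polynomial.monic_X_pow_sub_C P two_ne_zero
      set q : Polynomial (MvPolynomial (Fin n) K) := φe Q with hq
      have hφG : φe G = mP := by
        rw [hG, map_sub, map_pow, auxφ_X_last, auxφ_rename]
      have hnd : mP.natDegree = 2 := by
        rw [hmP]; exact Polynomial.natDegree_X_pow_sub_C
      have hm1 : mP ≠ 1 := by
        intro h
        rw [h, Polynomial.natDegree_one] at hnd
        omega
      have hdeg : (q %ₘ mP).natDegree ≤ 1 := by
        have h5 := Polynomial.natDegree_modByMonic_lt q hm hm1
        omega
      set a := (q %ₘ mP).coeff 0 with ha'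
      set b := (q %ₘ mP).coeff 1 with hb'
      have hr : q %ₘ mP = Polynomial.C b * Polynomial.X + Polynomial.C a :=
        Polynomial.eq_X_add_C_of_natDegree_le_one hdeg
      have hQeq : Q = G * φe.symm (q /ₘ mP)
          + (MvPolynomial.rename Fin.castSucc a
             + MvPolynomial.X (Fin.last n) * MvPolynomial.rename Fin.castSucc b) := by
        apply φe.injective
        rw [map_add, map_mul, hφG, AlgEquiv.apply_symm_apply, map_add, auxφ_rename, map_mul,
          auxφ_X_last, auxφ_rename]
        rw [← hq]
        conv_lhs => rw [← Polynomial.modByMonic_add_div q mP]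
        rw [hr]
        ring
      have h0 : MvPolynomial.aeval (R := K) e a + Δ * MvPolynomial.aeval (R := K) e b = 0 := by
        have h1 := hQ
        rw [hQeq, map_add, map_mul, hGker, zero_mul, zero_add, map_add, map_mul,
          MvPolynomial.aeval_rename, MvPolynomial.aeval_rename, hge, MvPolynomial.aeval_X,
          hg'] at h1
        exact h1
      set σsw : Equiv.Perm (Fin n) := Equiv.swap (⟨0, by omega⟩ : Fin n) ⟨1, by omega⟩ with hσsw
      have hsymaeval : ∀ x : MvPolynomial (Fin n) K,
          MvPolynomial.rename (σsw : Fin n → Fin n) (MvPolynomial.aeval (R := K) e x)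
            = MvPolynomial.aeval (R := K) e x := by
        intro x
        have hc := MvPolynomial.comp_aeval
          (φ := (MvPolynomial.rename (σsw : Fin n → Fin n) :
            MvPolynomial (Fin n) K →ₐ[K] MvPolynomial (Fin n) K)) (f := e)
        have hce : (fun i : Fin n => MvPolynomial.rename (σsw : Fin n → Fin n) (e i)) = e := by
          funext i
          rw [he i, MvPolynomial.rename_esymm]
        have := congrArg (fun ψ => ψ x) hc
        simp only [AlgHom.comp_apply] at this
        rw [this, hce]
      have happ := congrArg (MvPolynomial.rename (σsw : Fin n → Fin n)) h0
      rw [map_add, map_mul, hsymaeval, hsymaeval, hD, hσsw, aux_rename_D_swap n hn, ← hD,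
        map_zero] at happ
      have hb0 : MvPolynomial.aeval (R := K) e b = 0 := by
        have h2 : (2 : MvPolynomial (Fin n) K) * (Δ * MvPolynomial.aeval (R := K) e b) = 0 := by
          linear_combination h0 - happ
        have hΔ0 : Δ ≠ 0 := by rw [hD]; exact auxD_ne_zero n
        rcases mul_eq_zero.mp h2 with h | h
        · exact absurd h two_ne_zero
        rcases mul_eq_zero.mp h with h | h
        · exact absurd h hΔ0
        exact h
      have ha0 : MvPolynomial.aeval (R := K) e a = 0 := by
        rw [hb0, mul_zero, add_zero] at h0
        exact h0
      have hbz : b = 0 := hinj (by rw [hb0, map_zero])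
      have haz : a = 0 := hinj (by rw [ha0, map_zero])
      rw [hQeq, haz, hbz]
      simp only [map_zero, mul_zero, add_zero, zero_add]
      exact Ideal.mul_mem_right _ _ (Ideal.subset_span (Set.mem_singleton _))
    · rw [Ideal.span_le, Set.singleton_subset_iff]
      exact RingHom.mem_ker.mpr hGker
  · rw [hG, sub_eq_add_neg]
    apply MvPolynomial.IsWeightedHomogeneous.add
    · have hx : MvPolynomial.IsWeightedHomogeneous w
          (MvPolynomial.X (Fin.last n) ^ 2 : MvPolynomial (Fin (n + 1)) K)
          (w (Fin.last n) + w (Fin.last n)) := by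
        rw [pow_two]
        exact (MvPolynomial.isWeightedHomogeneous_X (R := K) w (Fin.last n)).mul
          (MvPolynomial.isWeightedHomogeneous_X (R := K) w (Fin.last n))
      have heq : w (Fin.last n) + w (Fin.last n) = n * (n - 1) := by
        rw [hw']; omega
      rwa [heq] at hx
    · apply aux_wh_neg
      apply aux_wh_rename
      have hwc : (w ∘ Fin.castSucc : Fin n → ℕ) = fun i : Fin n => (i : ℕ) + 1 := by
        funext i; exact hw i
      rw [hwc]
      exact hPwh
end
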